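/- arXiv:1111.3880 — 10 statements merged into one kernel-verified Lean document; each statement's English description precedes it below -/
import Mathlib

section
/- Let E and F be finite-dimensional real vector spaces, let P ⊆ E be a nonempty polytope whose affine span is all of E, and let Q ⊆ F be a polytope. Then the hom-set Hom(P,Q) = {f : E → F affine | f(P) ⊆ Q} is a polytope in the vector space of affine maps from E to F; that is, there exists a finite set S of affine maps E → F such that Hom(P,Q) equals the convex hull of S. -/
open Finset Set

section CutLemma

variable {W : Type*} [AddCommGroup W] [Module ℝ W]

/-- The point on the segment `[u,v]` with `l`-value `c` (or `u` when `l u = l v`). -/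
noncomputable def cutPt (l : W →ₗ[ℝ] ℝ) (c : ℝ) (u v : W) : W :=
  if l u = l v then u
  else ((l v - c) / (l v - l u)) • u + ((c - l u) / (l v - l u)) • v

lemma cutPt_mem_segment (l : W →ₗ[ℝ] ℝ) (c : ℝ) {u v : W} (hu : l u ≤ c) (hv : c ≤ l v) :
    cutPt l c u v ∈ segment ℝ u v := by
  unfold cutPt
  split_ifs with h
  · exact left_mem_segment ℝ u v
  · have hlt : l u < l v := lt_of_le_of_ne (hu.trans hv) h
    have hd : 0 < l v - l u := by linarith
    refine ⟨(l v - c) / (l v - l u), (c - l u) / (l v - l u),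
      div_nonneg (by linarith) hd.le, div_nonneg (by linarith) hd.le, ?_, rfl⟩
    field_simp
    ring

lemma l_cutPt (l : W →ₗ[ℝ] ℝ) (c : ℝ) {u v : W} (hu : l u ≤ c) (hv : c ≤ l v) :
    l (cutPt l c u v) = c := by
  unfold cutPt
  split_ifs with h
  · exact le_antisymm hu (h ▸ hv)
  · have hlt : l u < l v := lt_of_le_of_ne (hu.trans hv) h
    have hd : (l v - l u) ≠ 0 := by intro h0; apply h; linarith
    rw [map_add, map_smul, map_smul, smul_eq_mul, smul_eq_mul]
    field_simp
    ring

open scoped Classical in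
/-- Finite set generating `conv S ∩ {l = c}`. -/
noncomputable def cutFinset (l : W →ₗ[ℝ] ℝ) (c : ℝ) (S : Finset W) : Finset W :=
  ((S ×ˢ S).filter (fun p => l p.1 ≤ c ∧ c ≤ l p.2)).image (fun p => cutPt l c p.1 p.2)

lemma mem_cutFinset (l : W →ₗ[ℝ] ℝ) (c : ℝ) (S : Finset W) {u v : W}
    (hu : u ∈ S) (hv : v ∈ S) (hlu : l u ≤ c) (hlv : c ≤ l v) :
    cutPt l c u v ∈ cutFinset l c S := by
  classical
  unfold cutFinset
  refine Finset.mem_image.2 ⟨(u, v), ?_, rfl⟩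
  simp [Finset.mem_filter, Finset.mem_product, hu, hv, hlu, hlv]

lemma cutFinset_subset (l : W →ₗ[ℝ] ℝ) (c : ℝ) (S : Finset W) :
    (cutFinset l c S : Set W) ⊆ convexHull ℝ (S : Set W) ∩ {x | l x = c} := by
  classical
  intro x hx
  simp only [cutFinset, Finset.coe_image, Set.mem_image, Finset.mem_coe, Finset.mem_filter,
    Finset.mem_product] at hx
  obtain ⟨⟨u, v⟩, ⟨⟨huS, hvS⟩, hlu, hlv⟩, rfl⟩ := hx
  constructor
  · have hseg : segment ℝ u v ⊆ convexHull ℝ (S : Set W) :=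
      (convex_convexHull ℝ _).segment_subset (subset_convexHull ℝ _ huS)
        (subset_convexHull ℝ _ hvS)
    exact hseg (cutPt_mem_segment l c hlu hlv)
  · exact l_cutPt l c hlu hlv

private lemma sum_split {M : Type*} [AddCommMonoid M] [DecidableEq W] (A : Finset W) {i j : W}
    (hi : i ∈ A) (hj : j ∈ A) (hij : i ≠ j) (g : W → M) :
    ∑ y ∈ A, g y = g i + g j + ∑ y ∈ (A.erase j).erase i, g y := by
  rw [← Finset.add_sum_erase A g hj, ← Finset.add_sum_erase (A.erase j) g
    (Finset.mem_erase.2 ⟨hij, hi⟩)]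
  abel

/-- Key induction: a positive convex combination at level `c` lies in the hull of cut points. -/
lemma key_cut (S : Finset W) (l : W →ₗ[ℝ] ℝ) (c : ℝ) :
    ∀ (n : ℕ) (A : Finset W) (w : W → ℝ), A.card ≤ n → (A : Set W) ⊆ (S : Set W) →
      (∀ y ∈ A, 0 < w y) → ∑ y ∈ A, w y = 1 → l (∑ y ∈ A, w y • y) = c →
      (∑ y ∈ A, w y • y) ∈ convexHull ℝ (cutFinset l c S : Set W) := by
  classical
  intro n
  induction n with
  | zero =>
    intro A w hcard _ _ hsum _
    have : A = ∅ := Finset.card_eq_zero.mp (Nat.le_zero.mp hcard)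
    subst this
    simp at hsum
  | succ n ih =>
    intro A w hcard hAS hpos hsum hl
    by_cases hall : ∀ y ∈ A, l y = c
    · -- every point lies on the hyperplane
      have hmem : ∀ y ∈ A, y ∈ (cutFinset l c S : Set W) := by
        intro y hy
        have h2 := mem_cutFinset l c S (hAS hy) (hAS hy) (le_of_eq (hall y hy))
          (ge_of_eq (hall y hy))
        have hcut : cutPt l c y y = y := by unfold cutPt; simp
        rw [hcut] at h2
        exact h2
      have h := A.centerMass_mem_convexHull (fun y hy => (hpos y hy).le)
        (hsum ▸ one_pos) hmem
      rw [Finset.centerMass_eq_of_sum_1 _ _ hsum] at h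
      simpa using h
    · -- there are points strictly on both sides
      push_neg at hall
      have hsum0 : ∑ y ∈ A, w y * (l y - c) = 0 := by
        have h1 : l (∑ y ∈ A, w y • y) = ∑ y ∈ A, w y * l y := by
          rw [map_sum]; simp [smul_eq_mul]
        have h2 : ∑ y ∈ A, w y * l y = c := by rw [← h1, hl]
        calc ∑ y ∈ A, w y * (l y - c) = (∑ y ∈ A, w y * l y) - (∑ y ∈ A, w y) * c := by
              simp only [mul_sub]
              rw [Finset.sum_sub_distrib, ← Finset.sum_mul]
          _ = 0 := by rw [h2, hsum]; ring
      have hlo : ∃ i ∈ A, l i < c := by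
        by_contra hno
        push_neg at hno
        obtain ⟨j, hjA, hjne⟩ := hall
        have hjgt : c < l j := lt_of_le_of_ne (hno j hjA) (Ne.symm hjne)
        have : 0 < ∑ y ∈ A, w y * (l y - c) :=
          Finset.sum_pos' (fun y hy => mul_nonneg (hpos y hy).le (by linarith [hno y hy]))
            ⟨j, hjA, mul_pos (hpos j hjA) (by linarith)⟩
        linarith
      have hhi : ∃ j ∈ A, c < l j := by
        by_contra hno
        push_neg at hno
        obtain ⟨i, hiA, hilt⟩ := hlo
        have hlt : ∑ y ∈ A, w y * (l y - c) < 0 := by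
          have h1 : ∀ y ∈ A.erase i, w y * (l y - c) ≤ 0 := fun y hy =>
            mul_nonpos_of_nonneg_of_nonpos (hpos y (Finset.mem_of_mem_erase hy)).le
              (by linarith [hno y (Finset.mem_of_mem_erase hy)])
          have h2 : w i * (l i - c) < 0 := mul_neg_of_pos_of_neg (hpos i hiA) (by linarith)
          have h3 : ∑ y ∈ A.erase i, w y * (l y - c) ≤ 0 := Finset.sum_nonpos h1
          have h4 : w i * (l i - c) + ∑ y ∈ A.erase i, w y * (l y - c)
              = ∑ y ∈ A, w y * (l y - c) :=
            Finset.add_sum_erase A (fun y => w y * (l y - c)) hiA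
          linarith
        linarith
      obtain ⟨i, hiA, hilt⟩ := hlo
      obtain ⟨j, hjA, hjgt⟩ := hhi
      have hij : i ≠ j := fun h => by rw [h] at hilt; linarith
      have ha : (0:ℝ) < l j - c := by linarith
      have hb : (0:ℝ) < c - l i := by linarith
      have hd : (0:ℝ) < l j - l i := by linarith
      have hlij : l i ≠ l j := by intro h; rw [h] at hilt; linarith
      set p : W := cutPt l c i j with hp_def
      have hpT : p ∈ cutFinset l c S := mem_cutFinset l c S (hAS hiA) (hAS hjA) hilt.le hjgt.le
      have hlp : l p = c := l_cutPt l c hilt.le hjgt.le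
      have hp_eq : p = ((l j - c) / (l j - l i)) • i + ((c - l i) / (l j - l i)) • j := by
        rw [hp_def]; unfold cutPt; rw [if_neg hlij]
      set m : ℝ := min (w i / (l j - c)) (w j / (c - l i)) with hm_def
      have hm : 0 < m := lt_min (div_pos (hpos i hiA) ha) (div_pos (hpos j hjA) hb)
      have hma : m * (l j - c) ≤ w i := by
        have h := min_le_left (w i / (l j - c)) (w j / (c - l i))
        calc m * (l j - c) ≤ (w i / (l j - c)) * (l j - c) :=
              mul_le_mul_of_nonneg_right (hm_def ▸ h) ha.le
          _ = w i := div_mul_cancel₀ _ (ne_of_gt ha)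
      have hmb : m * (c - l i) ≤ w j := by
        have h := min_le_right (w i / (l j - c)) (w j / (c - l i))
        calc m * (c - l i) ≤ (w j / (c - l i)) * (c - l i) :=
              mul_le_mul_of_nonneg_right (hm_def ▸ h) hb.le
          _ = w j := div_mul_cancel₀ _ (ne_of_gt hb)
      have hμpos : 0 < m * (l j - l i) := mul_pos hm hd
      set w' : W → ℝ :=
        Function.update (Function.update w i (w i - m * (l j - c))) j (w j - m * (c - l i))
        with hw'_def
      have hw'i : w' i = w i - m * (l j - c) := by
        rw [hw'_def, Function.update_of_ne hij, Function.update_self]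
      have hw'j : w' j = w j - m * (c - l i) := by
        rw [hw'_def, Function.update_self]
      have hw'o : ∀ y, y ≠ i → y ≠ j → w' y = w y := fun y h1 h2 => by
        rw [hw'_def, Function.update_of_ne h2, Function.update_of_ne h1]
      have hw'_nonneg : ∀ y ∈ A, 0 ≤ w' y := by
        intro y hy
        by_cases h1 : y = i
        · subst h1; rw [hw'i]; linarith
        · by_cases h2 : y = j
          · subst h2; rw [hw'j]; linarith
          · rw [hw'o y h1 h2]; exact (hpos y hy).le
      have hrest : ∑ y ∈ (A.erase j).erase i, w' y = ∑ y ∈ (A.erase j).erase i, w y :=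
        Finset.sum_congr rfl fun y hy => hw'o y (Finset.mem_erase.1 hy).1
          (Finset.mem_erase.1 (Finset.mem_of_mem_erase hy)).1
      have hw'_sum : ∑ y ∈ A, w' y = 1 - m * (l j - l i) := by
        have e1 := sum_split A hiA hjA hij w'
        have e2 := sum_split A hiA hjA hij w
        rw [e2] at hsum
        rw [e1, hrest, hw'i, hw'j]
        have : m * (l j - c) + m * (c - l i) = m * (l j - l i) := by ring
        linarith
      have hμle : m * (l j - l i) ≤ 1 := by
        have h0 : 0 ≤ ∑ y ∈ A, w' y := Finset.sum_nonneg hw'_nonneg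
        linarith [hw'_sum ▸ h0]
      have hμp : (m * (l j - l i)) • p = (m * (l j - c)) • i + (m * (c - l i)) • j := by
        rw [hp_eq, smul_add, smul_smul, smul_smul]
        have hd' : (l j - l i) ≠ 0 := ne_of_gt hd
        congr 1
        · congr 1; field_simp
        · congr 1; field_simp
      have hx_decomp : ∑ y ∈ A, w y • y
          = (m * (l j - l i)) • p + ∑ y ∈ A, w' y • y := by
        rw [hμp, sum_split A hiA hjA hij (fun y => w y • y),
          sum_split A hiA hjA hij (fun y => w' y • y)]
        have hrest2 : ∑ y ∈ (A.erase j).erase i, w' y • y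
            = ∑ y ∈ (A.erase j).erase i, w y • y :=
          Finset.sum_congr rfl fun y hy => by
            rw [hw'o y (Finset.mem_erase.1 hy).1
              (Finset.mem_erase.1 (Finset.mem_of_mem_erase hy)).1]
        rw [hrest2, hw'i, hw'j, sub_smul, sub_smul]
        abel
      have hzero : w' i = 0 ∨ w' j = 0 := by
        rcases min_cases (w i / (l j - c)) (w j / (c - l i)) with ⟨hmin, _⟩ | ⟨hmin, _⟩
        · left; rw [hw'i, hm_def, hmin]; field_simp; ring
        · right; rw [hw'j, hm_def, hmin]; field_simp; ring
      by_cases hμ1 : m * (l j - l i) = 1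
      · -- the remainder vanishes, x = p
        have hs0 : ∑ y ∈ A, w' y = 0 := by rw [hw'_sum, hμ1]; ring
        have hall0 : ∀ y ∈ A, w' y = 0 :=
          (Finset.sum_eq_zero_iff_of_nonneg hw'_nonneg).1 hs0
        have hz : ∑ y ∈ A, w' y • y = 0 :=
          Finset.sum_eq_zero (fun y hy => by rw [hall0 y hy, zero_smul])
        rw [hx_decomp, hz, add_zero, hμ1, one_smul]
        exact subset_convexHull ℝ _ hpT
      · have hμlt : m * (l j - l i) < 1 := lt_of_le_of_ne hμle hμ1
        have hs'pos : (0:ℝ) < 1 - m * (l j - l i) := by linarith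
        set B : Finset W := A.filter (fun y => w' y ≠ 0) with hB_def
        set w'' : W → ℝ := fun y => w' y / (1 - m * (l j - l i)) with hw''_def
        have hBA : B ⊆ A := Finset.filter_subset _ _
        have hBcard : B.card ≤ n := by
          have hssub : B ⊂ A := by
            rcases hzero with h | h
            · exact (Finset.ssubset_iff_of_subset hBA).2
                ⟨i, hiA, by rw [hB_def]; simp [h]⟩
            · exact (Finset.ssubset_iff_of_subset hBA).2
                ⟨j, hjA, by rw [hB_def]; simp [h]⟩
          have := Finset.card_lt_card hssub
          omega
        have hsumB : ∑ y ∈ B, w' y = ∑ y ∈ A, w' y := by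
          rw [hB_def]
          exact Finset.sum_filter_of_ne (fun y _ h => h)
        have hsumB2 : ∑ y ∈ B, w' y • y = ∑ y ∈ A, w' y • y := by
          rw [hB_def]
          refine Finset.sum_filter_of_ne (fun y _ h => ?_)
          intro hz; apply h; rw [hz, zero_smul]
        have hw''sum : ∑ y ∈ B, w'' y = 1 := by
          rw [hw''_def]
          simp only
          rw [← Finset.sum_div, hsumB, hw'_sum, div_self (ne_of_gt hs'pos)]
        have hw''pos : ∀ y ∈ B, 0 < w'' y := by
          intro y hy
          rw [hB_def] at hy
          obtain ⟨hyA, hyne⟩ := Finset.mem_filter.1 hy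
          exact div_pos (lt_of_le_of_ne (hw'_nonneg y hyA) (Ne.symm hyne)) hs'pos
        have hx' : ∑ y ∈ B, w'' y • y
            = (1 - m * (l j - l i))⁻¹ • ∑ y ∈ A, w' y • y := by
          rw [← hsumB2, Finset.smul_sum]
          refine Finset.sum_congr rfl (fun y _ => ?_)
          simp only [hw''_def]
          rw [smul_smul, div_eq_inv_mul]
        have hlrest : l (∑ y ∈ A, w' y • y) = (1 - m * (l j - l i)) * c := by
          have h1 : l (∑ y ∈ A, w y • y)
              = l ((m * (l j - l i)) • p) + l (∑ y ∈ A, w' y • y) := by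
            rw [hx_decomp, map_add]
          have h2 : l ((m * (l j - l i)) • p) = (m * (l j - l i)) * c := by
            rw [map_smul, smul_eq_mul, hlp]
          rw [hl, h2] at h1
          linarith
        have hlx' : l (∑ y ∈ B, w'' y • y) = c := by
          rw [hx', map_smul, hlrest, smul_eq_mul]
          field_simp
        have hmem' : (∑ y ∈ B, w'' y • y) ∈ convexHull ℝ (cutFinset l c S : Set W) :=
          ih B w'' hBcard (fun y hy => hAS (hBA hy)) hw''pos hw''sum hlx'
        have hfinal : ∑ y ∈ A, w y • y
            = (m * (l j - l i)) • p + (1 - m * (l j - l i)) • ∑ y ∈ B, w'' y • y := by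
          rw [hx', smul_smul, mul_inv_cancel₀ (ne_of_gt hs'pos), one_smul, hx_decomp]
        rw [hfinal]
        exact (convex_convexHull ℝ _) (subset_convexHull ℝ _ hpT) hmem'
          hμpos.le hs'pos.le (by ring)

/-- A polytope intersected with a hyperplane is a polytope. -/
lemma convexHull_inter_hyperplane (S : Finset W) (l : W →ₗ[ℝ] ℝ) (c : ℝ) :
    convexHull ℝ (S : Set W) ∩ {x | l x = c} = convexHull ℝ (cutFinset l c S : Set W) := by
  classical
  apply Set.Subset.antisymm
  · rintro x ⟨hxS, hxl⟩
    rw [Finset.convexHull_eq] at hxS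
    obtain ⟨w, hw0, hw1, hwx⟩ := hxS
    rw [Finset.centerMass_eq_of_sum_1 _ _ hw1] at hwx
    set A : Finset W := S.filter (fun y => w y ≠ 0) with hA_def
    have hsumA : ∑ y ∈ A, w y = 1 := by
      rw [hA_def, Finset.sum_filter_of_ne (fun y _ h => h), hw1]
    have hsumA2 : ∑ y ∈ A, w y • y = x := by
      rw [hA_def, Finset.sum_filter_of_ne (fun y _ h => ?_)]
      · simpa using hwx
      · intro hz; apply h; rw [hz, zero_smul]
    have hpos : ∀ y ∈ A, 0 < w y := by
      intro y hy
      rw [hA_def] at hy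
      obtain ⟨hyS, hyne⟩ := Finset.mem_filter.1 hy
      exact lt_of_le_of_ne (hw0 y hyS) (Ne.symm hyne)
    have h := key_cut S l c A.card A w le_rfl
      (fun y hy => Finset.mem_coe.2 (Finset.mem_filter.1 hy).1) hpos hsumA
      (by rw [hsumA2]; exact hxl)
    rwa [hsumA2] at h
  · exact convexHull_min (cutFinset_subset l c S)
      ((convex_convexHull ℝ _).inter (convex_hyperplane l.isLinear c))

/-- A polytope intersected with finitely many hyperplanes through 0 is a polytope. -/
lemma convexHull_inter_kernels {ι : Type*} (I : Finset ι) (l : ι → (W →ₗ[ℝ] ℝ)) (S : Finset W) :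
    ∃ T : Finset W, convexHull ℝ (S : Set W) ∩ {x | ∀ i ∈ I, l i x = 0}
      = convexHull ℝ (T : Set W) := by
  classical
  induction I using Finset.induction_on generalizing S with
  | empty => exact ⟨S, by simp⟩
  | @insert a I ha ih =>
    obtain ⟨T', hT'⟩ := ih S
    refine ⟨cutFinset (l a) 0 T', ?_⟩
    rw [← convexHull_inter_hyperplane T' (l a) 0, ← hT']
    ext x
    simp only [Set.mem_inter_iff, Set.mem_setOf_eq, Finset.mem_insert]
    constructor
    · rintro ⟨h1, h2⟩
      exact ⟨⟨h1, fun i hi => h2 i (Or.inr hi)⟩, h2 a (Or.inl rfl)⟩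
    · rintro ⟨⟨h1, h2⟩, h3⟩
      refine ⟨h1, fun i hi => ?_⟩
      rcases hi with rfl | hi
      · exact h3
      · exact h2 i hi

end CutLemma

/-- For a nonempty full-dimensional polytope `P ⊆ E` and a polytope `Q ⊆ F`,
the hom-set `Hom(P,Q) = {f : E →ᵃ[ℝ] F | f(P) ⊆ Q}` is a polytope in the space of affine
maps, i.e. the convex hull of a finite set of affine maps. -/
theorem hom_polytope_is_polytope
    {E F : Type*} [AddCommGroup E] [Module ℝ E] [FiniteDimensional ℝ E]
    [AddCommGroup F] [Module ℝ F] [FiniteDimensional ℝ F]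
    (P : Set E) (Q : Set F)
    (hP : ∃ SP : Finset E, P = convexHull ℝ (SP : Set E))
    (hPne : P.Nonempty)
    (hPspan : affineSpan ℝ P = ⊤)
    (hQ : ∃ SQ : Finset F, Q = convexHull ℝ (SQ : Set F)) :
    ∃ S : Finset (E →ᵃ[ℝ] F),
      {f : E →ᵃ[ℝ] F | ∀ x ∈ P, f x ∈ Q} = convexHull ℝ (S : Set (E →ᵃ[ℝ] F)) := by
  classical
  obtain ⟨SP, rfl⟩ := hP
  obtain ⟨SQ, rfl⟩ := hQ
  have hSPne : (SP : Set E).Nonempty := by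
    by_contra h
    rw [Set.not_nonempty_iff_eq_empty] at h
    rw [h, convexHull_empty] at hPne
    exact Set.not_nonempty_empty hPne
  have hspanSP : affineSpan ℝ (SP : Set E) = ⊤ := by
    rw [← affineSpan_convexHull]; exact hPspan
  have hvs : vectorSpan ℝ (SP : Set E) = ⊤ :=
    AffineSubspace.vectorSpan_eq_top_of_affineSpan_eq_top ℝ E E hspanSP
  -- the evaluation linear map into `ι → F`
  set Φ : (E →ᵃ[ℝ] F) →ₗ[ℝ] ({x // x ∈ SP} → F) :=
    { toFun := fun f v => f v.1
      map_add' := fun f g => by funext v; simp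
      map_smul' := fun r f => by funext v; simp } with hΦ_def
  have hΦ_apply : ∀ (f : E →ᵃ[ℝ] F) (v : {x // x ∈ SP}), Φ f v = f v.1 := fun f v => rfl
  have hΦinj : Function.Injective Φ := by
    intro f g hfg
    have hval : ∀ v ∈ SP, f v = g v := fun v hv => congrFun hfg ⟨v, hv⟩
    obtain ⟨p₀, hp₀⟩ := hSPne
    have hlin : f.linear = g.linear := by
      apply LinearMap.ext_on (s := (SP : Set E) -ᵥ (SP : Set E))
      · rw [← vectorSpan_def, hvs]
      · intro x hx
        rw [Set.mem_vsub] at hx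
        obtain ⟨u, hu, v, hv, rfl⟩ := hx
        rw [AffineMap.linearMap_vsub, AffineMap.linearMap_vsub, hval u hu, hval v hv]
    ext x
    have h1 : f.linear (x -ᵥ p₀) = f x -ᵥ f p₀ := AffineMap.linearMap_vsub f x p₀
    have h2 : g.linear (x -ᵥ p₀) = g x -ᵥ g p₀ := AffineMap.linearMap_vsub g x p₀
    have h3 : f x - f p₀ = g x - g p₀ := by
      rw [← vsub_eq_sub, ← vsub_eq_sub, ← h1, ← h2, hlin]
    have h4 : f p₀ = g p₀ := hval p₀ hp₀
    have := h3
    rw [h4] at this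
    linear_combination (norm := abel) this
  -- membership only depends on values on `SP`
  have hQconv : Convex ℝ (convexHull ℝ (SQ : Set F)) := convex_convexHull ℝ _
  have hH : {f : E →ᵃ[ℝ] F | ∀ x ∈ convexHull ℝ (SP : Set E), f x ∈ convexHull ℝ (SQ : Set F)}
      = {f : E →ᵃ[ℝ] F | ∀ v : {x // x ∈ SP}, f v.1 ∈ convexHull ℝ (SQ : Set F)} := by
    ext f
    constructor
    · intro h v
      exact h v.1 (subset_convexHull ℝ _ v.2)
    · intro h x hx
      have himg : f '' convexHull ℝ (SP : Set E) ⊆ convexHull ℝ (SQ : Set F) := by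
        rw [AffineMap.image_convexHull]
        refine convexHull_min ?_ hQconv
        rintro _ ⟨v, hv, rfl⟩
        exact h ⟨v, hv⟩
      exact himg ⟨x, hx, rfl⟩
  -- the range of Φ as an intersection of kernels of functionals
  set V : Submodule ℝ ({x // x ∈ SP} → F) := LinearMap.range Φ with hV_def
  obtain ⟨U, hU⟩ := Submodule.exists_isCompl V
  set pr : ({x // x ∈ SP} → F) →ₗ[ℝ] U := U.linearProjOfIsCompl V hU.symm with hpr_def
  set bU := Module.finBasis ℝ U with hbU_def
  set lfun : Fin (Module.finrank ℝ U) → (({x // x ∈ SP} → F) →ₗ[ℝ] ℝ) :=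
    fun k => (bU.coord k).comp pr with hlfun_def
  have hVmem : ∀ x, x ∈ V ↔ ∀ k, lfun k x = 0 := by
    intro x
    rw [← Submodule.linearProjOfIsCompl_apply_eq_zero_iff hU.symm]
    rw [← bU.forall_coord_eq_zero_iff]
    constructor
    · intro h k; exact h k
    · intro h k; exact h k
  -- the product polytope
  set S₀ : Finset ({x // x ∈ SP} → F) := Fintype.piFinset (fun _ => SQ) with hS₀_def
  have hpi : convexHull ℝ (S₀ : Set ({x // x ∈ SP} → F))
      = Set.pi Set.univ (fun _ => convexHull ℝ (SQ : Set F)) := by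
    rw [hS₀_def, Fintype.coe_piFinset, convexHull_pi]
  -- the image of the hom-set under Φ
  have hΦH : Φ '' {f : E →ᵃ[ℝ] F | ∀ v : {x // x ∈ SP}, f v.1 ∈ convexHull ℝ (SQ : Set F)}
      = convexHull ℝ (S₀ : Set ({x // x ∈ SP} → F))
        ∩ {x | ∀ k ∈ Finset.univ, lfun k x = 0} := by
    ext y
    constructor
    · rintro ⟨f, hf, rfl⟩
      refine ⟨?_, ?_⟩
      · rw [hpi]
        intro v _
        exact hf v
      · intro k _
        exact (hVmem (Φ f)).1 ⟨f, rfl⟩ k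
    · rintro ⟨hy1, hy2⟩
      have hyV : y ∈ V := (hVmem y).2 (fun k => hy2 k (Finset.mem_univ k))
      obtain ⟨f, rfl⟩ := hyV
      refine ⟨f, ?_, rfl⟩
      intro v
      rw [hpi] at hy1
      exact hy1 v (Set.mem_univ v)
  -- intersect with the kernels
  obtain ⟨T, hT⟩ := convexHull_inter_kernels Finset.univ lfun S₀
  rw [hT] at hΦH
  -- pull the vertices back through Φ
  have hg : ∀ t ∈ T, ∃ f : E →ᵃ[ℝ] F,
      (∀ v : {x // x ∈ SP}, f v.1 ∈ convexHull ℝ (SQ : Set F)) ∧ Φ f = t := by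
    intro t ht
    have : t ∈ Φ '' {f : E →ᵃ[ℝ] F | ∀ v : {x // x ∈ SP}, f v.1 ∈ convexHull ℝ (SQ : Set F)} := by
      rw [hΦH]
      exact subset_convexHull ℝ _ ht
    obtain ⟨f, hf, hft⟩ := this
    exact ⟨f, hf, hft⟩
  set S : Finset (E →ᵃ[ℝ] F) :=
    T.attach.image (fun t => Classical.choose (hg t.1 t.2)) with hS_def
  have hΦS : Φ '' (S : Set (E →ᵃ[ℝ] F)) = (T : Set ({x // x ∈ SP} → F)) := by
    ext y
    constructor
    · rintro ⟨f, hf, rfl⟩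
      rw [hS_def] at hf
      simp only [Finset.coe_image, Set.mem_image, Finset.mem_coe, Finset.mem_attach] at hf
      obtain ⟨t, -, rfl⟩ := hf
      rw [(Classical.choose_spec (hg t.1 t.2)).2]
      exact t.2
    · intro hy
      refine ⟨Classical.choose (hg y hy), ?_, (Classical.choose_spec (hg y hy)).2⟩
      rw [hS_def]
      simp only [Finset.coe_image, Set.mem_image, Finset.mem_coe, Finset.mem_attach]
      exact ⟨⟨y, hy⟩, trivial, rfl⟩
  refine ⟨S, ?_⟩
  rw [hH]
  have himg : Φ '' {f : E →ᵃ[ℝ] F | ∀ v : {x // x ∈ SP}, f v.1 ∈ convexHull ℝ (SQ : Set F)}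
      = Φ '' (convexHull ℝ (S : Set (E →ᵃ[ℝ] F))) := by
    rw [hΦH, Φ.image_convexHull, hΦS]
  exact Function.Injective.image_injective hΦinj himg
end

section
/- Let E, F, G be finite-dimensional real vector spaces, let P ⊆ E and Q ⊆ F be nonempty polytopes whose affine spans are E and F respectively, and let R ⊆ G be a polytope. Define join(P,Q) ⊆ E × ℝ × F as the convex hull of {(x,0,0) : x ∈ P} ∪ {(0,1,y) : y ∈ Q}, and let ι_P : E → E × ℝ × F, ι_P(x) = (x,0,0) and ι_Q : F → E × ℝ × F, ι_Q(y) = (0,1,y). Then the map f ↦ (f ∘ ι_P, f ∘ ι_Q) is a bijection from Hom(join(P,Q), R) = {f : E × ℝ × F → G affine | f(join(P,Q)) ⊆ R} onto the set product Hom(P,R) × Hom(Q,R). -/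
private lemma aff_apply' {V W : Type*} [AddCommGroup V] [Module ℝ V]
    [AddCommGroup W] [Module ℝ W] (f : V →ᵃ[ℝ] W) (v : V) :
    f v = f.linear v + f 0 := by
  have := f.map_vadd 0 v
  simpa using this

/-- For polytopes `P ⊆ E`, `Q ⊆ F` (nonempty, full-dimensional) and a polytope
`R ⊆ G`, the map `f ↦ (f ∘ ι_P, f ∘ ι_Q)` is a bijection from `Hom(join(P,Q), R)` onto
`Hom(P,R) × Hom(Q,R)`, where `join(P,Q) ⊆ E × ℝ × F` is the convex hull of
`{(x,0,0) : x ∈ P} ∪ {(0,1,y) : y ∈ Q}`. -/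
theorem hom_from_join
    {E F G : Type*} [AddCommGroup E] [Module ℝ E] [FiniteDimensional ℝ E]
    [AddCommGroup F] [Module ℝ F] [FiniteDimensional ℝ F]
    [AddCommGroup G] [Module ℝ G] [FiniteDimensional ℝ G]
    (P : Set E) (Q : Set F) (R : Set G)
    (hP : ∃ SP : Finset E, P = convexHull ℝ (SP : Set E)) (hPne : P.Nonempty)
    (hPspan : affineSpan ℝ P = ⊤)
    (hQ : ∃ SQ : Finset F, Q = convexHull ℝ (SQ : Set F)) (hQne : Q.Nonempty)
    (hQspan : affineSpan ℝ Q = ⊤)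
    (hR : ∃ SR : Finset G, R = convexHull ℝ (SR : Set G))
    (ιP : E →ᵃ[ℝ] E × ℝ × F) (hιP : ∀ x : E, ιP x = (x, (0 : ℝ), (0 : F)))
    (ιQ : F →ᵃ[ℝ] E × ℝ × F) (hιQ : ∀ y : F, ιQ y = ((0 : E), (1 : ℝ), y)) :
    Set.BijOn (fun f : (E × ℝ × F) →ᵃ[ℝ] G => (f.comp ιP, f.comp ιQ))
      {f : (E × ℝ × F) →ᵃ[ℝ] G | ∀ z ∈ convexHull ℝ
          (((fun x : E => (x, (0 : ℝ), (0 : F))) '' P) ∪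
           ((fun y : F => ((0 : E), (1 : ℝ), y)) '' Q)), f z ∈ R}
      ({f : E →ᵃ[ℝ] G | ∀ x ∈ P, f x ∈ R} ×ˢ {g : F →ᵃ[ℝ] G | ∀ y ∈ Q, g y ∈ R}) := by
  obtain ⟨SR, hRdef⟩ := hR
  have hRconv : Convex ℝ R := hRdef ▸ convex_convexHull ℝ _
  set S : Set (E × ℝ × F) :=
    (((fun x : E => (x, (0 : ℝ), (0 : F))) '' P) ∪
     ((fun y : F => ((0 : E), (1 : ℝ), y)) '' Q)) with hS
  refine ⟨?_, ?_, ?_⟩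
  · -- MapsTo
    intro f hf
    refine ⟨fun x hx => ?_, fun y hy => ?_⟩
    · simp only [AffineMap.comp_apply, hιP]
      exact hf _ (subset_convexHull ℝ S (Or.inl ⟨x, hx, rfl⟩))
    · simp only [AffineMap.comp_apply, hιQ]
      exact hf _ (subset_convexHull ℝ S (Or.inr ⟨y, hy, rfl⟩))
  · -- InjOn
    intro f _ g _ hfg
    have h1 : f.comp ιP = g.comp ιP := congrArg Prod.fst hfg
    have h2 : f.comp ιQ = g.comp ιQ := congrArg Prod.snd hfg
    have hP0 : ∀ x : E, f (x, 0, 0) = g (x, 0, 0) := fun x => by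
      have := DFunLike.congr_fun h1 x
      simpa [AffineMap.comp_apply, hιP] using this
    have hQ0 : ∀ y : F, f (0, 1, y) = g (0, 1, y) := fun y => by
      have := DFunLike.congr_fun h2 y
      simpa [AffineMap.comp_apply, hιQ] using this
    have hc : f 0 = g 0 := hP0 0
    have hL1 : ∀ x : E, f.linear (x, 0, 0) = g.linear (x, 0, 0) := fun x => by
      have h := hP0 x
      rw [aff_apply' f, aff_apply' g] at h
      have hc' : f (0 : E × ℝ × F) = g (0 : E × ℝ × F) := hc
      rw [hc'] at h
      exact add_right_cancel h
    have hL2 : ∀ y : F, f.linear ((0 : E), (1 : ℝ), y) = g.linear ((0 : E), (1 : ℝ), y) :=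
      fun y => by
      have h := hQ0 y
      rw [aff_apply' f, aff_apply' g] at h
      have hc' : f (0 : E × ℝ × F) = g (0 : E × ℝ × F) := hc
      rw [hc'] at h
      exact add_right_cancel h
    have hL3 : ∀ y : F, f.linear ((0 : E), (0 : ℝ), y) = g.linear ((0 : E), (0 : ℝ), y) :=
      fun y => by
      have key : ((0 : E), (0 : ℝ), y) = ((0 : E), (1 : ℝ), y) - ((0 : E), (1 : ℝ), (0 : F)) := by
        simp [Prod.ext_iff]
      rw [key, map_sub, map_sub, hL2 y, hL2 0]
    have hLt : ∀ t : ℝ, f.linear ((0 : E), t, (0 : F)) = g.linear ((0 : E), t, (0 : F)) :=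
      fun t => by
      have key : ((0 : E), t, (0 : F)) = t • (((0 : E), (1 : ℝ), (0 : F)) - ((0 : E), (0 : ℝ), (0 : F))) := by
        simp [Prod.ext_iff]
      rw [key, map_smul, map_smul, map_sub, map_sub, hL2 0, hL3 0]
    ext z
    obtain ⟨u, t, w⟩ := z
    have key : ((u, t, w) : E × ℝ × F) = (u, (0:ℝ), (0:F)) + ((0:E), t, (0:F)) + ((0:E), (0:ℝ), w) := by
      simp [Prod.ext_iff]
    rw [aff_apply' f, aff_apply' g, key, map_add, map_add, map_add, map_add,
      hL1 u, hLt t, hL3 w, hc]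
  · -- SurjOn
    rintro ⟨g, h⟩ ⟨hg, hh⟩
    set L : (E × ℝ × F) →ₗ[ℝ] G :=
      g.linear.comp (LinearMap.fst ℝ E (ℝ × F)) +
      ((LinearMap.fst ℝ ℝ F).comp (LinearMap.snd ℝ E (ℝ × F))).smulRight (h 0 - g 0) +
      h.linear.comp ((LinearMap.snd ℝ ℝ F).comp (LinearMap.snd ℝ E (ℝ × F))) with hL
    set f : (E × ℝ × F) →ᵃ[ℝ] G := L.toAffineMap + AffineMap.const ℝ _ (g 0) with hf
    have hfapply : ∀ (u : E) (t : ℝ) (w : F),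
        f (u, t, w) = g.linear u + t • (h 0 - g 0) + h.linear w + g 0 := by
      intro u t w
      simp [hf, hL, LinearMap.smulRight_apply]
    have hfP : ∀ x : E, f (x, (0:ℝ), (0:F)) = g x := fun x => by
      rw [hfapply, aff_apply' g x]; simp
    have hfQ : ∀ y : F, f ((0:E), (1:ℝ), y) = h y := fun y => by
      rw [hfapply, aff_apply' h y]; simp; abel
    refine ⟨f, ?_, ?_⟩
    · intro z hz
      have himg : f '' convexHull ℝ S = convexHull ℝ (f '' S) :=
        f.image_convexHull S
      have hsub : f '' S ⊆ R := by
        rintro _ ⟨s, hs | hs, rfl⟩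
        · obtain ⟨x, hx, rfl⟩ := hs
          rw [hfP]; exact hg x hx
        · obtain ⟨y, hy, rfl⟩ := hs
          rw [hfQ]; exact hh y hy
      have : f z ∈ convexHull ℝ (f '' S) := himg ▸ Set.mem_image_of_mem f hz
      exact convexHull_min hsub hRconv this
    · simp only [Prod.mk.injEq]
      constructor
      · ext x; rw [AffineMap.comp_apply, hιP]; exact hfP x
      · ext y; rw [AffineMap.comp_apply, hιQ]; exact hfQ y
end

section
/- Let E and F be finite-dimensional real vector spaces and let C₁ ⊆ E, C₂ ⊆ F be pointed polyhedral cones, i.e. each Cᵢ is the set of nonnegative linear combinations of a finite set of vectors and satisfies Cᵢ ∩ (−Cᵢ) = {0}. Define C₁⊗C₂ ⊆ E ⊗ F as the set of nonnegative linear combinations of pure tensors x ⊗ y with x ∈ C₁, y ∈ C₂. Then: (a) for all nonzero x ∈ C₁ and nonzero y ∈ C₂, if ℝ≥0·x is an extremal ray of C₁ and ℝ≥0·y is an extremal ray of C₂, then ℝ≥0·(x ⊗ y) is an extremal ray of C₁⊗C₂; and (b) conversely, for every nonzero z ∈ C₁⊗C₂ such that ℝ≥0·z is an extreme subset of C₁⊗C₂,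 there exist nonzero x ∈ C₁ and y ∈ C₂ such that z = x ⊗ y and ℝ≥0·x, ℝ≥0·y are extremal rays of C₁ and C₂ respectively. -/
open TensorProduct

section Helpers
variable {E : Type*} [AddCommGroup E] [Module ℝ E]

lemma aux_ray_smul {v : E} :
    ∀ a ∈ {w : E | ∃ t : ℝ, 0 ≤ t ∧ w = t • v}, ∀ s : ℝ, 0 ≤ s →
      s • a ∈ {w : E | ∃ t : ℝ, 0 ≤ t ∧ w = t • v} := by
  rintro a ⟨t, ht, rfl⟩ s hs
  exact ⟨s * t, mul_nonneg hs ht, by rw [smul_smul]⟩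

lemma aux_face_add {C R : Set E} (hext : IsExtreme ℝ C R)
    (hCsmul : ∀ a ∈ C, ∀ s : ℝ, 0 ≤ s → s • a ∈ C)
    (hRsmul : ∀ a ∈ R, ∀ s : ℝ, 0 ≤ s → s • a ∈ R)
    {a b : E} (ha : a ∈ C) (hb : b ∈ C) (hab : a + b ∈ R) : a ∈ R ∧ b ∈ R := by
  have h2a : (2:ℝ) • a ∈ C := hCsmul a ha 2 (by norm_num)
  have h2b : (2:ℝ) • b ∈ C := hCsmul b hb 2 (by norm_num)
  have hseg : a + b ∈ openSegment ℝ ((2:ℝ) • a) ((2:ℝ) • b) := by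
    refine ⟨1/2, 1/2, by norm_num, by norm_num, by norm_num, ?_⟩
    rw [smul_smul, smul_smul]; norm_num
  obtain ⟨h1, h2⟩ := And.intro (hext.2 h2a h2b hab hseg)
    (hext.right_mem_of_mem_openSegment h2a h2b hab hseg)
  constructor
  · have := hRsmul _ h1 (1/2) (by norm_num)
    rwa [smul_smul, show (1/2 : ℝ) * 2 = 1 by norm_num, one_smul] at this
  · have := hRsmul _ h2 (1/2) (by norm_num)
    rwa [smul_smul, show (1/2 : ℝ) * 2 = 1 by norm_num, one_smul] at this

lemma aux_face_sum {C R : Set E} (hext : IsExtreme ℝ C R)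
    (hC0 : (0:E) ∈ C)
    (hCadd : ∀ a ∈ C, ∀ b ∈ C, a + b ∈ C)
    (hCsmul : ∀ a ∈ C, ∀ s : ℝ, 0 ≤ s → s • a ∈ C)
    (hRsmul : ∀ a ∈ R, ∀ s : ℝ, 0 ≤ s → s • a ∈ R)
    {k : ℕ} {w : Fin k → E} (hw : ∀ i, w i ∈ C)
    (hsum : (∑ i, w i) ∈ R) : ∀ i, w i ∈ R := by
  classical
  intro i
  have hmem : ∀ (s : Finset (Fin k)), (∑ j ∈ s, w j) ∈ C := fun s =>
    Finset.sum_induction w (· ∈ C) (fun a b ha hb => hCadd a ha b hb) hC0 (fun j _ => hw j)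
  have h := Finset.add_sum_erase Finset.univ w (Finset.mem_univ i)
  exact (aux_face_add hext hCsmul hRsmul (hw i) (hmem (Finset.univ.erase i))
    (by rw [h]; exact hsum)).1

lemma aux_cone_props {S : Finset E} {C : Set E}
    (hC : C = {x : E | ∃ c : E → ℝ, (∀ v, 0 ≤ c v) ∧ x = ∑ v ∈ S, c v • v}) :
    (0:E) ∈ C ∧ (∀ a ∈ C, ∀ b ∈ C, a + b ∈ C) ∧ (∀ a ∈ C, ∀ t : ℝ, 0 ≤ t → t • a ∈ C) := by
  subst hC
  refine ⟨⟨fun _ => 0, fun _ => le_rfl, by simp⟩, ?_, ?_⟩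
  · rintro a ⟨c, hc, rfl⟩ b ⟨d, hd, rfl⟩
    exact ⟨c + d, fun v => add_nonneg (hc v) (hd v), by
      rw [← Finset.sum_add_distrib]
      exact Finset.sum_congr rfl fun v _ => (add_smul (c v) (d v) v).symm⟩
  · rintro a ⟨c, hc, rfl⟩ t ht
    exact ⟨fun v => t * c v, fun v => mul_nonneg ht (hc v), by
      rw [Finset.smul_sum]
      exact Finset.sum_congr rfl fun v _ => by rw [smul_smul]⟩

lemma aux_gen_mem {S : Finset E} {C : Set E}
    (hC : C = {x : E | ∃ c : E → ℝ, (∀ v, 0 ≤ c v) ∧ x = ∑ v ∈ S, c v • v})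
    {v : E} (hv : v ∈ S) : v ∈ C := by
  classical
  subst hC
  refine ⟨fun u => if u = v then 1 else 0, fun u => by dsimp only; split <;> norm_num, ?_⟩
  rw [Finset.sum_congr rfl (fun u _ => show (if u = v then (1:ℝ) else 0) • u
      = if u = v then u else 0 by split <;> simp_all)]
  rw [Finset.sum_ite_eq' S v (fun u => u), if_pos hv]

end Helpers

lemma aux_exists_strict_functional {E : Type*} [AddCommGroup E] [Module ℝ E]
    [FiniteDimensional ℝ E] {S : Finset E} {C : Set E}
    (hC : C = {x : E | ∃ c : E → ℝ, (∀ v, 0 ≤ c v) ∧ x = ∑ v ∈ S, c v • v})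
    (hpointed : C ∩ (-C) = {0}) :
    ∃ f : E →ₗ[ℝ] ℝ, ∀ z ∈ C, 0 ≤ f z ∧ (f z = 0 → z = 0) := by
  classical
  obtain ⟨hC0, hCadd, hCsmul⟩ := aux_cone_props hC
  set n := Module.finrank ℝ E with hn
  set e : E ≃ₗ[ℝ] (Fin n → ℝ) := (Module.finBasis ℝ E).equivFun with he
  set Sne : Finset E := S.filter (· ≠ 0) with hSne
  set D : Finset (Fin n → ℝ) := Sne.image e with hD
  have hgen : ∀ v ∈ S, v ∈ C := fun v hv => aux_gen_mem hC hv
  have h0 : (0 : Fin n → ℝ) ∉ convexHull ℝ (D : Set (Fin n → ℝ)) := by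
    intro h
    rw [Finset.mem_convexHull] at h
    obtain ⟨w, hw0, hw1, hwc⟩ := h
    rw [Finset.centerMass_eq_of_sum_1 _ _ hw1] at hwc
    have hsum0 : ∑ v ∈ Sne, w (e v) • v = 0 := by
      have := congrArg e.symm hwc
      rw [map_sum, map_zero] at this
      rw [hD, Finset.sum_image (fun a _ b _ hab => e.injective hab)] at this
      simpa using this
    have hw1' : ∑ v ∈ Sne, w (e v) = 1 := by
      rw [hD, Finset.sum_image (fun a _ b _ hab => e.injective hab)] at hw1
      exact hw1
    obtain ⟨v₀, hv₀S, hv₀⟩ : ∃ v₀ ∈ Sne, w (e v₀) ≠ 0 := by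
      by_contra hall
      push_neg at hall
      rw [Finset.sum_congr rfl (fun v hv => hall v hv)] at hw1'
      simp at hw1'
    have hv₀pos : 0 < w (e v₀) :=
      lt_of_le_of_ne (hw0 _ (Finset.mem_image_of_mem e hv₀S)) (Ne.symm hv₀)
    have hsplit : w (e v₀) • v₀ + ∑ v ∈ Sne.erase v₀, w (e v) • v = 0 := by
      rw [Finset.add_sum_erase Sne (fun v => w (e v) • v) hv₀S]; exact hsum0
    have hmem1 : w (e v₀) • v₀ ∈ C :=
      hCsmul v₀ (hgen v₀ (Finset.mem_of_mem_filter v₀ hv₀S)) _ hv₀pos.le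
    have hmem2 : (∑ v ∈ Sne.erase v₀, w (e v) • v) ∈ C :=
      Finset.sum_induction _ (· ∈ C) (fun a b ha hb => hCadd a ha b hb) hC0
        (fun v hv => hCsmul v (hgen v (Finset.mem_of_mem_filter v (Finset.mem_of_mem_erase hv)))
          _ (hw0 _ (Finset.mem_image_of_mem e (Finset.mem_of_mem_erase hv))))
    have : w (e v₀) • v₀ ∈ C ∩ (-C) := by
      refine ⟨hmem1, ?_⟩
      rw [Set.mem_neg]
      have : -(w (e v₀) • v₀) = ∑ v ∈ Sne.erase v₀, w (e v) • v := by
        rw [neg_eq_iff_add_eq_zero]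
        exact hsplit
      rw [this]; exact hmem2
    rw [hpointed, Set.mem_singleton_iff, smul_eq_zero] at this
    rcases this with h | h
    · exact hv₀ h
    · exact (Finset.mem_filter.1 hv₀S).2 h
  obtain ⟨f, u, hf0, hfD⟩ := _root_.geometric_hahn_banach_point_closed (E := Fin n → ℝ)
    (convex_convexHull ℝ (D : Set (Fin n → ℝ)))
    ((D : Set (Fin n → ℝ)).toFinite.isCompact_convexHull (𝕜 := ℝ).isClosed) h0
  rw [map_zero] at hf0
  refine ⟨f.toLinearMap.comp (e : E →ₗ[ℝ] Fin n → ℝ), ?_⟩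
  have hpos : ∀ v ∈ S, v ≠ 0 → 0 < f (e v) := by
    intro v hv hvne
    exact hf0.trans (hfD (e v) (subset_convexHull ℝ _
      (Finset.mem_coe.2 (Finset.mem_image_of_mem e (Finset.mem_filter.2 ⟨hv, hvne⟩)))))
  rintro z hz
  rw [hC] at hz
  obtain ⟨c, hc, rfl⟩ := hz
  have hterm : ∀ v ∈ S, 0 ≤ c v * f (e v) := by
    intro v hv
    by_cases hvz : v = 0
    · simp [hvz]
    · exact mul_nonneg (hc v) (hpos v hv hvz).le
  have hval : (f.toLinearMap.comp (e : E →ₗ[ℝ] Fin n → ℝ)) (∑ v ∈ S, c v • v)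
      = ∑ v ∈ S, c v * f (e v) := by
    rw [map_sum]
    exact Finset.sum_congr rfl fun v _ => by simp [smul_eq_mul]
  constructor
  · rw [hval]; exact Finset.sum_nonneg hterm
  · intro hzero
    rw [hval] at hzero
    rw [Finset.sum_eq_zero_iff_of_nonneg hterm] at hzero
    apply Finset.sum_eq_zero
    intro v hv
    by_cases hvz : v = 0
    · simp [hvz]
    · have := hzero v hv
      have hcv : c v = 0 := by
        rcases mul_eq_zero.1 this with h | h
        · exact h
        · exact absurd h (hpos v hv hvz).ne'
      simp [hcv]

section TensorHelpers
variable {E F : Type*} [AddCommGroup E] [Module ℝ E] [AddCommGroup F] [Module ℝ F]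

noncomputable def auxContrL (f : E →ₗ[ℝ] ℝ) : E ⊗[ℝ] F →ₗ[ℝ] F :=
  (TensorProduct.lid ℝ F).toLinearMap.comp (TensorProduct.map f LinearMap.id)

@[simp] lemma auxContrL_tmul (f : E →ₗ[ℝ] ℝ) (a : E) (b : F) :
    auxContrL f (a ⊗ₜ[ℝ] b) = f a • b := by
  simp [auxContrL]

noncomputable def auxContrR (g : F →ₗ[ℝ] ℝ) : E ⊗[ℝ] F →ₗ[ℝ] E :=
  (TensorProduct.rid ℝ E).toLinearMap.comp (TensorProduct.map LinearMap.id g)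

@[simp] lemma auxContrR_tmul (g : F →ₗ[ℝ] ℝ) (a : E) (b : F) :
    auxContrR g (a ⊗ₜ[ℝ] b) = g b • a := by
  simp [auxContrR]

lemma aux_exists_dual_one {y : E} (hy : y ≠ 0) : ∃ g : E →ₗ[ℝ] ℝ, g y = 1 := by
  obtain ⟨f, hf⟩ : ∃ f : Module.Dual ℝ E, f y ≠ 0 := by
    by_contra h
    push_neg at h
    exact hy ((Module.forall_dual_apply_eq_zero_iff ℝ y).1 h)
  exact ⟨(f y)⁻¹ • f, by simp [inv_mul_cancel₀ hf]⟩

lemma aux_tmul_right_cancel {y : F} (hy : y ≠ 0) {a b : E}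
    (h : a ⊗ₜ[ℝ] y = b ⊗ₜ[ℝ] y) : a = b := by
  obtain ⟨g, hg⟩ := aux_exists_dual_one hy
  have := congrArg (auxContrR g) h
  simpa [hg] using this

lemma aux_tmul_left_cancel {x : E} (hx : x ≠ 0) {a b : F}
    (h : x ⊗ₜ[ℝ] a = x ⊗ₜ[ℝ] b) : a = b := by
  obtain ⟨f, hf⟩ := aux_exists_dual_one hx
  have := congrArg (auxContrL f) h
  simpa [hf] using this

end TensorHelpers

/-- For pointed polyhedral cones `C₁ ⊆ E`, `C₂ ⊆ F`, the extremal rays of the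
tensor product cone `C₁ ⊗ C₂ ⊆ E ⊗ F` are exactly the rays spanned by pure tensors `x ⊗ y`
of extremal generators of `C₁` and `C₂`. -/
theorem tensor_cone_extremal_rays
    {E F : Type*} [AddCommGroup E] [Module ℝ E] [FiniteDimensional ℝ E]
    [AddCommGroup F] [Module ℝ F] [FiniteDimensional ℝ F]
    (C₁ : Set E) (C₂ : Set F)
    (hC₁ : ∃ S : Finset E, C₁ = {x : E | ∃ c : E → ℝ, (∀ v, 0 ≤ c v) ∧ x = ∑ v ∈ S, c v • v})
    (hC₂ : ∃ S : Finset F, C₂ = {y : F | ∃ c : F → ℝ, (∀ v, 0 ≤ c v) ∧ y = ∑ v ∈ S, c v • v})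
    (hC₁pointed : C₁ ∩ (-C₁) = {0})
    (hC₂pointed : C₂ ∩ (-C₂) = {0})
    (T : Set (E ⊗[ℝ] F))
    (hT : T = {z : E ⊗[ℝ] F | ∃ (k : ℕ) (x : Fin k → E) (y : Fin k → F) (c : Fin k → ℝ),
      (∀ i, x i ∈ C₁) ∧ (∀ i, y i ∈ C₂) ∧ (∀ i, 0 ≤ c i) ∧
      z = ∑ i, c i • (x i ⊗ₜ[ℝ] y i)}) :
    -- (a)
    (∀ x ∈ C₁, ∀ y ∈ C₂, x ≠ 0 → y ≠ 0 →
      IsExtreme ℝ C₁ {w : E | ∃ t : ℝ, 0 ≤ t ∧ w = t • x} →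
      IsExtreme ℝ C₂ {w : F | ∃ t : ℝ, 0 ≤ t ∧ w = t • y} →
      IsExtreme ℝ T {w : E ⊗[ℝ] F | ∃ t : ℝ, 0 ≤ t ∧ w = t • (x ⊗ₜ[ℝ] y)}) ∧
    -- (b)
    (∀ z ∈ T, z ≠ 0 →
      IsExtreme ℝ T {w : E ⊗[ℝ] F | ∃ t : ℝ, 0 ≤ t ∧ w = t • z} →
      ∃ x ∈ C₁, ∃ y ∈ C₂, x ≠ 0 ∧ y ≠ 0 ∧ z = x ⊗ₜ[ℝ] y ∧
        IsExtreme ℝ C₁ {w : E | ∃ t : ℝ, 0 ≤ t ∧ w = t • x} ∧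
        IsExtreme ℝ C₂ {w : F | ∃ t : ℝ, 0 ≤ t ∧ w = t • y}) := by
  classical
  obtain ⟨S₁, hS₁⟩ := hC₁
  obtain ⟨S₂, hS₂⟩ := hC₂
  obtain ⟨hC₁0, hC₁add, hC₁smul⟩ := aux_cone_props hS₁
  obtain ⟨hC₂0, hC₂add, hC₂smul⟩ := aux_cone_props hS₂
  obtain ⟨f, hf⟩ := aux_exists_strict_functional hS₁ hC₁pointed
  obtain ⟨g, hg⟩ := aux_exists_strict_functional hS₂ hC₂pointed
  have hTpure : ∀ x ∈ C₁, ∀ y ∈ C₂, x ⊗ₜ[ℝ] y ∈ T := by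
    intro x hx y hy
    rw [hT]
    exact ⟨1, fun _ => x, fun _ => y, fun _ => 1, fun _ => hx, fun _ => hy,
      fun _ => zero_le_one, by simp⟩
  have hT0 : (0 : E ⊗[ℝ] F) ∈ T := by
    rw [hT]
    exact ⟨0, Fin.elim0, Fin.elim0, Fin.elim0, fun i => i.elim0, fun i => i.elim0,
      fun i => i.elim0, by simp⟩
  have hTsmul : ∀ z ∈ T, ∀ t : ℝ, 0 ≤ t → t • z ∈ T := by
    intro z hz t ht
    rw [hT] at hz ⊢
    obtain ⟨k, xs, ys, c, hxs, hys, hc, rfl⟩ := hz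
    exact ⟨k, xs, ys, fun i => t * c i, hxs, hys, fun i => mul_nonneg ht (hc i), by
      rw [Finset.smul_sum]
      exact Finset.sum_congr rfl fun i _ => by rw [smul_smul]⟩
  have hTadd : ∀ u ∈ T, ∀ v ∈ T, u + v ∈ T := by
    intro u hu v hv
    rw [hT] at hu hv ⊢
    obtain ⟨k, xs, ys, c, hxs, hys, hc, rfl⟩ := hu
    obtain ⟨l, as, bs, d, has, hbs, hd, rfl⟩ := hv
    refine ⟨k + l, Fin.append xs as, Fin.append ys bs, Fin.append c d, ?_, ?_, ?_, ?_⟩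
    · intro i
      refine Fin.addCases (fun j => ?_) (fun j => ?_) i
      · simpa [Fin.append_left] using hxs j
      · simpa [Fin.append_right] using has j
    · intro i
      refine Fin.addCases (fun j => ?_) (fun j => ?_) i
      · simpa [Fin.append_left] using hys j
      · simpa [Fin.append_right] using hbs j
    · intro i
      refine Fin.addCases (fun j => ?_) (fun j => ?_) i
      · simpa [Fin.append_left] using hc j
      · simpa [Fin.append_right] using hd j
    · rw [Fin.sum_univ_add]
      congr 1 <;> exact Finset.sum_congr rfl fun i _ => by
        simp [Fin.append_left, Fin.append_right]
  constructor
  · -- part (a)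
    intro x hx y hy hx0 hy0 hxe hye
    have key : ∀ (k : ℕ) (xs : Fin k → E) (ys : Fin k → F) (c : Fin k → ℝ),
        (∀ i, xs i ∈ C₁) → (∀ i, ys i ∈ C₂) → (∀ i, 0 ≤ c i) →
        ∀ t : ℝ, 0 ≤ t → (∑ i, c i • (xs i ⊗ₜ[ℝ] ys i)) = t • (x ⊗ₜ[ℝ] y) →
        ∀ i, ∃ s : ℝ, 0 ≤ s ∧ c i • (xs i ⊗ₜ[ℝ] ys i) = s • (x ⊗ₜ[ℝ] y) := by
      intro k xs ys c hxs hys hc t ht hsum i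
      have h1 : ∑ j, (c j * f (xs j)) • ys j = (t * f x) • y := by
        have h := congrArg (auxContrL f) hsum
        rw [map_smul, auxContrL_tmul, smul_smul, map_sum] at h
        rw [← h]
        exact Finset.sum_congr rfl fun j _ => by
          rw [map_smul, auxContrL_tmul, smul_smul]
      have h2 : ∑ j, (c j * g (ys j)) • xs j = (t * g y) • x := by
        have h := congrArg (auxContrR g) hsum
        rw [map_smul, auxContrR_tmul, smul_smul, map_sum] at h
        rw [← h]
        exact Finset.sum_congr rfl fun j _ => by
          rw [map_smul, auxContrR_tmul, smul_smul]
      have hmem2 : ∀ j, (c j * f (xs j)) • ys j ∈ C₂ := fun j =>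
        hC₂smul _ (hys j) _ (mul_nonneg (hc j) (hf _ (hxs j)).1)
      have hmem1 : ∀ j, (c j * g (ys j)) • xs j ∈ C₁ := fun j =>
        hC₁smul _ (hxs j) _ (mul_nonneg (hc j) (hg _ (hys j)).1)
      have hray2 := aux_face_sum hye hC₂0 hC₂add hC₂smul aux_ray_smul hmem2
        (⟨t * f x, mul_nonneg ht (hf x hx).1, h1⟩ :
          (∑ j, (c j * f (xs j)) • ys j) ∈ {w : F | ∃ s : ℝ, 0 ≤ s ∧ w = s • y})
      have hray1 := aux_face_sum hxe hC₁0 hC₁add hC₁smul aux_ray_smul hmem1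
        (⟨t * g y, mul_nonneg ht (hg y hy).1, h2⟩ :
          (∑ j, (c j * g (ys j)) • xs j) ∈ {w : E | ∃ s : ℝ, 0 ≤ s ∧ w = s • x})
      obtain ⟨sy, hsy0, hsyeq⟩ := hray2 i
      obtain ⟨sx, hsx0, hsxeq⟩ := hray1 i
      by_cases hci : c i = 0
      · exact ⟨0, le_rfl, by simp [hci]⟩
      by_cases hxi : xs i = 0
      · exact ⟨0, le_rfl, by simp [hxi]⟩
      by_cases hyi : ys i = 0
      · exact ⟨0, le_rfl, by simp [hyi]⟩
      have hcip : 0 < c i := lt_of_le_of_ne (hc i) (Ne.symm hci)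
      have hfxi : 0 < f (xs i) := lt_of_le_of_ne (hf _ (hxs i)).1
        (fun h => hxi ((hf _ (hxs i)).2 h.symm))
      have hgyi : 0 < g (ys i) := lt_of_le_of_ne (hg _ (hys i)).1
        (fun h => hyi ((hg _ (hys i)).2 h.symm))
      obtain ⟨α, hα, hxa⟩ : ∃ α : ℝ, 0 ≤ α ∧ xs i = α • x := by
        have hpos : c i * g (ys i) ≠ 0 := (mul_pos hcip hgyi).ne'
        refine ⟨(c i * g (ys i))⁻¹ * sx, mul_nonneg (inv_nonneg.2 (mul_pos hcip hgyi).le) hsx0, ?_⟩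
        rw [mul_smul, ← hsxeq, smul_smul, inv_mul_cancel₀ hpos, one_smul]
      obtain ⟨β, hβ, hyb⟩ : ∃ β : ℝ, 0 ≤ β ∧ ys i = β • y := by
        have hpos : c i * f (xs i) ≠ 0 := (mul_pos hcip hfxi).ne'
        refine ⟨(c i * f (xs i))⁻¹ * sy, mul_nonneg (inv_nonneg.2 (mul_pos hcip hfxi).le) hsy0, ?_⟩
        rw [mul_smul, ← hsyeq, smul_smul, inv_mul_cancel₀ hpos, one_smul]
      have h' : (α * β) • (x ⊗ₜ[ℝ] y) = (α • x) ⊗ₜ[ℝ] (β • y) := by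
        rw [mul_smul, ← TensorProduct.tmul_smul, TensorProduct.smul_tmul']
      refine ⟨c i * (α * β), mul_nonneg (hc i) (mul_nonneg hα hβ), ?_⟩
      rw [hxa, hyb, ← h', smul_smul]
    have claim : ∀ u ∈ T, ∀ v ∈ T, ∀ t : ℝ, 0 ≤ t → u + v = t • (x ⊗ₜ[ℝ] y) →
        (∃ s : ℝ, 0 ≤ s ∧ u = s • (x ⊗ₜ[ℝ] y)) ∧
        (∃ s : ℝ, 0 ≤ s ∧ v = s • (x ⊗ₜ[ℝ] y)) := by
      intro u hu v hv t ht huv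
      rw [hT] at hu hv
      obtain ⟨k, xs, ys, c, hxs, hys, hc, rfl⟩ := hu
      obtain ⟨l, as, bs, d, has, hbs, hd, rfl⟩ := hv
      have hsum : (∑ i : Fin (k + l),
          (Fin.append c d) i • ((Fin.append xs as) i ⊗ₜ[ℝ] (Fin.append ys bs) i))
          = t • (x ⊗ₜ[ℝ] y) := by
        rw [Fin.sum_univ_add, ← huv]
        congr 1 <;> exact Finset.sum_congr rfl fun i _ => by
          simp [Fin.append_left, Fin.append_right]
      have hkey := key (k + l) _ _ _
        (fun i => Fin.addCases (fun j => by simpa [Fin.append_left] using hxs j)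
          (fun j => by simpa [Fin.append_right] using has j) i)
        (fun i => Fin.addCases (fun j => by simpa [Fin.append_left] using hys j)
          (fun j => by simpa [Fin.append_right] using hbs j) i)
        (fun i => Fin.addCases (fun j => by simpa [Fin.append_left] using hc j)
          (fun j => by simpa [Fin.append_right] using hd j) i)
        t ht hsum
      constructor
      · have h : ∀ i : Fin k, ∃ s : ℝ, 0 ≤ s ∧ c i • (xs i ⊗ₜ[ℝ] ys i) = s • (x ⊗ₜ[ℝ] y) := by
          intro i
          have := hkey (Fin.castAdd l i)
          simp only [Fin.append_left] at this
          exact this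
        choose s hs0 hseq using h
        exact ⟨∑ i, s i, Finset.sum_nonneg fun i _ => hs0 i, by
          rw [Finset.sum_smul]
          exact Finset.sum_congr rfl fun i _ => hseq i⟩
      · have h : ∀ i : Fin l, ∃ s : ℝ, 0 ≤ s ∧ d i • (as i ⊗ₜ[ℝ] bs i) = s • (x ⊗ₜ[ℝ] y) := by
          intro i
          have := hkey (Fin.natAdd k i)
          simp only [Fin.append_right] at this
          exact this
        choose s hs0 hseq using h
        exact ⟨∑ i, s i, Finset.sum_nonneg fun i _ => hs0 i, by
          rw [Finset.sum_smul]
          exact Finset.sum_congr rfl fun i _ => hseq i⟩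
    constructor
    · rintro w ⟨t, ht, rfl⟩
      exact hTsmul _ (hTpure x hx y hy) t ht
    · intro z₁ hz₁ z₂ hz₂ w hw hseg
      obtain ⟨θ₁, θ₂, hθ₁, hθ₂, hθs, heq⟩ := hseg
      obtain ⟨t, ht, hwt⟩ := hw
      obtain ⟨⟨s₁, hs₁, hu₁⟩, ⟨s₂, hs₂, hu₂⟩⟩ := claim (θ₁ • z₁) (hTsmul _ hz₁ _ hθ₁.le)
        (θ₂ • z₂) (hTsmul _ hz₂ _ hθ₂.le) t ht (heq.trans hwt)
      · exact ⟨θ₁⁻¹ * s₁, mul_nonneg (inv_nonneg.2 hθ₁.le) hs₁, by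
          rw [mul_smul, ← hu₁, inv_smul_smul₀ hθ₁.ne']⟩
  · -- part (b)
    intro z hz hz0 hze
    rw [hT] at hz
    obtain ⟨k, xs, ys, c, hxs, hys, hc, hzeq⟩ := hz
    have hterm : ∀ i, c i • (xs i ⊗ₜ[ℝ] ys i) ∈ T := fun i =>
      hTsmul _ (hTpure _ (hxs i) _ (hys i)) _ (hc i)
    have hsumR : (∑ i, c i • (xs i ⊗ₜ[ℝ] ys i))
        ∈ {w : E ⊗[ℝ] F | ∃ t : ℝ, 0 ≤ t ∧ w = t • z} :=
      ⟨1, zero_le_one, by rw [one_smul, ← hzeq]⟩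
    have hfs := aux_face_sum hze hT0 hTadd hTsmul aux_ray_smul hterm hsumR
    choose ts hts0 htseq using hfs
    have hts1 : ∑ i, ts i = 1 := by
      have h1 : (∑ i, ts i) • z = z := by
        calc (∑ i, ts i) • z = ∑ i, ts i • z := Finset.sum_smul
          _ = ∑ i, c i • (xs i ⊗ₜ[ℝ] ys i) :=
              Finset.sum_congr rfl fun i _ => (htseq i).symm
          _ = z := hzeq.symm
      by_contra hne
      have h2 : ((∑ i, ts i) - 1) • z = 0 := by rw [sub_smul, h1, one_smul, sub_self]
      have h3 : z = 0 := by
        have := congrArg (fun w => ((∑ i, ts i) - 1)⁻¹ • w) h2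
        simpa [smul_smul, inv_mul_cancel₀ (sub_ne_zero.2 hne)] using this
      exact hz0 h3
    obtain ⟨i, hi⟩ : ∃ i, ts i ≠ 0 := by
      by_contra hall
      push_neg at hall
      rw [Finset.sum_congr rfl (fun i _ => hall i)] at hts1
      simp at hts1
    have hz' : z = ((ts i)⁻¹ * c i) • (xs i ⊗ₜ[ℝ] ys i) := by
      rw [mul_smul, htseq i, inv_smul_smul₀ hi]
    have hzxy : z = (((ts i)⁻¹ * c i) • xs i) ⊗ₜ[ℝ] ys i := by
      rw [← TensorProduct.smul_tmul']; exact hz'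
    have hxC : ((ts i)⁻¹ * c i) • xs i ∈ C₁ :=
      hC₁smul _ (hxs i) _ (mul_nonneg (inv_nonneg.2 (hts0 i)) (hc i))
    set x : E := ((ts i)⁻¹ * c i) • xs i with hxdef
    have hx0 : x ≠ 0 := by
      intro h
      exact hz0 (by rw [hzxy, h, TensorProduct.zero_tmul])
    have hy0 : ys i ≠ 0 := by
      intro h
      exact hz0 (by rw [hzxy, h, TensorProduct.tmul_zero])
    refine ⟨x, hxC, ys i, hys i, hx0, hy0, by rw [hzxy], ?_, ?_⟩
    · -- extremeness of ray x in C₁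
      constructor
      · rintro w ⟨t, ht, rfl⟩
        exact hC₁smul _ hxC _ ht
      · intro a ha b hb w hw hseg
        obtain ⟨t, ht, rfl⟩ := hw
        obtain ⟨θ₁, θ₂, hθ₁, hθ₂, hθs, heq⟩ := hseg
        rcases ht.eq_or_lt with h0 | hpos
        · rw [← h0, zero_smul] at heq
          have hmem : θ₁ • a ∈ C₁ ∩ (-C₁) := by
            refine ⟨hC₁smul _ ha _ hθ₁.le, ?_⟩
            rw [Set.mem_neg]
            have hn : -(θ₁ • a) = θ₂ • b := by
              rw [neg_eq_iff_add_eq_zero]; exact heq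
            rw [hn]
            exact hC₁smul _ hb _ hθ₂.le
          rw [hC₁pointed, Set.mem_singleton_iff] at hmem
          have ha0 : a = 0 := by
            have := congrArg (fun w => θ₁⁻¹ • w) hmem
            simpa [smul_smul, inv_mul_cancel₀ hθ₁.ne'] using this
          have hb0 : b = 0 := by
            rw [hmem, zero_add] at heq
            have := congrArg (fun w => θ₂⁻¹ • w) heq
            simpa [smul_smul, inv_mul_cancel₀ hθ₂.ne'] using this
          exact ⟨0, le_rfl, by rw [ha0, zero_smul]⟩
        · have hteq : θ₁ • (a ⊗ₜ[ℝ] ys i) + θ₂ • (b ⊗ₜ[ℝ] ys i) = t • z := by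
            calc θ₁ • (a ⊗ₜ[ℝ] ys i) + θ₂ • (b ⊗ₜ[ℝ] ys i)
                = (θ₁ • a + θ₂ • b) ⊗ₜ[ℝ] ys i := by
                  rw [TensorProduct.add_tmul, smul_tmul', smul_tmul']
              _ = (t • x) ⊗ₜ[ℝ] ys i := by rw [heq]
              _ = t • (x ⊗ₜ[ℝ] ys i) := by rw [smul_tmul']
              _ = t • z := by rw [← hzxy]
          obtain ⟨⟨sa, hsa, haeq⟩, ⟨sb, hsb, hbeq⟩⟩ := (fun h1 h2 h3 h4 => And.intro
            (hze.2 h1 h2 h3 h4) (hze.right_mem_of_mem_openSegment h1 h2 h3 h4))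
            (hTpure a ha _ (hys i)) (hTpure b hb _ (hys i))
            (⟨t, ht, rfl⟩ : t • z ∈ {w : E ⊗[ℝ] F | ∃ s : ℝ, 0 ≤ s ∧ w = s • z})
            ⟨θ₁, θ₂, hθ₁, hθ₂, hθs, hteq⟩
          have haeq' : a ⊗ₜ[ℝ] ys i = (sa • x) ⊗ₜ[ℝ] ys i := by
            rw [haeq, hzxy, TensorProduct.smul_tmul']
          have hbeq' : b ⊗ₜ[ℝ] ys i = (sb • x) ⊗ₜ[ℝ] ys i := by
            rw [hbeq, hzxy, TensorProduct.smul_tmul']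
          exact ⟨sa, hsa, aux_tmul_right_cancel hy0 haeq'⟩
    · -- extremeness of ray (ys i) in C₂
      constructor
      · rintro w ⟨t, ht, rfl⟩
        exact hC₂smul _ (hys i) _ ht
      · intro a ha b hb w hw hseg
        obtain ⟨t, ht, rfl⟩ := hw
        obtain ⟨θ₁, θ₂, hθ₁, hθ₂, hθs, heq⟩ := hseg
        rcases ht.eq_or_lt with h0 | hpos
        · rw [← h0, zero_smul] at heq
          have hmem : θ₁ • a ∈ C₂ ∩ (-C₂) := by
            refine ⟨hC₂smul _ ha _ hθ₁.le, ?_⟩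
            rw [Set.mem_neg]
            have hn : -(θ₁ • a) = θ₂ • b := by
              rw [neg_eq_iff_add_eq_zero]; exact heq
            rw [hn]
            exact hC₂smul _ hb _ hθ₂.le
          rw [hC₂pointed, Set.mem_singleton_iff] at hmem
          have ha0 : a = 0 := by
            have := congrArg (fun w => θ₁⁻¹ • w) hmem
            simpa [smul_smul, inv_mul_cancel₀ hθ₁.ne'] using this
          have hb0 : b = 0 := by
            rw [hmem, zero_add] at heq
            have := congrArg (fun w => θ₂⁻¹ • w) heq
            simpa [smul_smul, inv_mul_cancel₀ hθ₂.ne'] using this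
          exact ⟨0, le_rfl, by rw [ha0, zero_smul]⟩
        · have hteq : θ₁ • (x ⊗ₜ[ℝ] a) + θ₂ • (x ⊗ₜ[ℝ] b) = t • z := by
            calc θ₁ • (x ⊗ₜ[ℝ] a) + θ₂ • (x ⊗ₜ[ℝ] b)
                = x ⊗ₜ[ℝ] (θ₁ • a + θ₂ • b) := by
                  rw [TensorProduct.tmul_add, TensorProduct.tmul_smul,
                    TensorProduct.tmul_smul]
              _ = x ⊗ₜ[ℝ] (t • ys i) := by rw [heq]
              _ = t • (x ⊗ₜ[ℝ] ys i) := by rw [TensorProduct.tmul_smul]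
              _ = t • z := by rw [← hzxy]
          obtain ⟨⟨sa, hsa, haeq⟩, ⟨sb, hsb, hbeq⟩⟩ := (fun h1 h2 h3 h4 => And.intro
            (hze.2 h1 h2 h3 h4) (hze.right_mem_of_mem_openSegment h1 h2 h3 h4))
            (hTpure x hxC a ha) (hTpure x hxC b hb)
            (⟨t, ht, rfl⟩ : t • z ∈ {w : E ⊗[ℝ] F | ∃ s : ℝ, 0 ≤ s ∧ w = s • z})
            ⟨θ₁, θ₂, hθ₁, hθ₂, hθs, hteq⟩
          have haeq' : x ⊗ₜ[ℝ] a = x ⊗ₜ[ℝ] (sa • ys i) := by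
            rw [haeq, hzxy, TensorProduct.tmul_smul]
          have hbeq' : x ⊗ₜ[ℝ] b = x ⊗ₜ[ℝ] (sb • ys i) := by
            rw [hbeq, hzxy, TensorProduct.tmul_smul]
          exact ⟨sa, hsa, aux_tmul_left_cancel hx0 haeq'⟩
end

section
/- Let E and F be finite-dimensional real vector spaces and let P ⊆ E, Q ⊆ F be nonempty polytopes. Define the tensor product polytope P⊗Q ⊆ (E ⊗ F) × E × F as the convex hull of {(x ⊗ y, x, y) : x ∈ P, y ∈ Q}. Then the set of extreme points of P⊗Q equals {(v ⊗ w, v, w) : v an extreme point of P, w an extreme point of Q}. -/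
open TensorProduct

private lemma extreme_combo {E : Type*} [AddCommGroup E] [Module ℝ E] {s : Set E}
    (hs : Convex ℝ s) {v : E} (hv : v ∈ Set.extremePoints ℝ s) {ι : Type}
    (t : Finset ι) :
    ∀ (c : ι → ℝ) (x : ι → E), (∀ i ∈ t, 0 ≤ c i) → (∑ i ∈ t, c i) = 1 →
      (∀ i ∈ t, x i ∈ s) → (∑ i ∈ t, c i • x i) = v → ∀ i ∈ t, c i ≠ 0 → x i = v := by
  classical
  induction t using Finset.induction_on with
  | empty => intro c x _ hsum _ _ i hi; simp at hi
  | @insert a t ha ih =>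
    intro c x hc hsum hx hcomb i hi hci
    rw [Finset.sum_insert ha] at hsum hcomb
    by_cases hca : c a = 0
    · rw [hca, zero_add] at hsum
      rw [hca, zero_smul, zero_add] at hcomb
      rcases Finset.mem_insert.1 hi with rfl | hit
      · exact absurd hca hci
      · exact ih c x (fun j hj => hc j (Finset.mem_insert_of_mem hj)) hsum
          (fun j hj => hx j (Finset.mem_insert_of_mem hj)) hcomb i hit hci
    · have hca' : 0 < c a := lt_of_le_of_ne (hc a (Finset.mem_insert_self a t)) (Ne.symm hca)
      set b : ℝ := ∑ j ∈ t, c j with hb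
      have hbnn : 0 ≤ b := Finset.sum_nonneg fun j hj => hc j (Finset.mem_insert_of_mem hj)
      rcases eq_or_lt_of_le hbnn with hb0 | hbpos
      · have hall : ∀ j ∈ t, c j = 0 := by
          intro j hj
          exact (Finset.sum_eq_zero_iff_of_nonneg
            (fun k hk => hc k (Finset.mem_insert_of_mem hk))).1 hb0.symm j hj
        have hca1 : c a = 1 := by
          have : b = 0 := hb0.symm
          linarith
        have hxa : x a = v := by
          have : (∑ j ∈ t, c j • x j) = 0 :=
            Finset.sum_eq_zero fun j hj => by rw [hall j hj, zero_smul]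
          rw [this, add_zero, hca1, one_smul] at hcomb
          exact hcomb
        rcases Finset.mem_insert.1 hi with rfl | hit
        · exact hxa
        · exact absurd (hall i hit) hci
      · set y : E := b⁻¹ • ∑ j ∈ t, c j • x j with hy
        have hys : y ∈ s := by
          have : y = ∑ j ∈ t, (b⁻¹ * c j) • x j := by
            rw [hy, Finset.smul_sum]; simp [smul_smul]
          rw [this]
          refine hs.sum_mem (fun j hj => mul_nonneg (inv_nonneg.2 hbnn)
            (hc j (Finset.mem_insert_of_mem hj))) ?_
            (fun j hj => hx j (Finset.mem_insert_of_mem hj))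
          rw [← Finset.mul_sum, ← hb, inv_mul_cancel₀ (ne_of_gt hbpos)]
        have hseg : v ∈ openSegment ℝ (x a) y := by
          refine ⟨c a, b, hca', hbpos, hsum, ?_⟩
          rw [hy, smul_inv_smul₀ (ne_of_gt hbpos)]
          exact hcomb
        obtain ⟨hxa, hyv⟩ := (mem_extremePoints.1 hv).2 _ (hx a (Finset.mem_insert_self a t)) _ hys hseg
        rcases Finset.mem_insert.1 hi with rfl | hit
        · exact hxa
        · -- apply ih with rescaled weights
          have hsum' : (∑ j ∈ t, b⁻¹ * c j) = 1 := by
            rw [← Finset.mul_sum, ← hb, inv_mul_cancel₀ (ne_of_gt hbpos)]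
          have hcomb' : (∑ j ∈ t, (b⁻¹ * c j) • x j) = v := by
            have : (∑ j ∈ t, (b⁻¹ * c j) • x j) = y := by
              rw [hy, Finset.smul_sum]; simp [smul_smul]
            rw [this, hyv]
          have := ih (fun j => b⁻¹ * c j) x
            (fun j hj => mul_nonneg (inv_nonneg.2 hbnn) (hc j (Finset.mem_insert_of_mem hj)))
            hsum' (fun j hj => hx j (Finset.mem_insert_of_mem hj)) hcomb' i hit
          exact this (mul_ne_zero (inv_ne_zero (ne_of_gt hbpos)) hci)

private lemma fiber_eq {E F : Type*} [AddCommGroup E] [Module ℝ E]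
    [AddCommGroup F] [Module ℝ F] {P : Set E} {Q : Set F}
    (hPc : Convex ℝ P) (hQc : Convex ℝ Q)
    {v : E} (hv : v ∈ Set.extremePoints ℝ P) {w : F} (hw : w ∈ Set.extremePoints ℝ Q)
    {z : (E ⊗[ℝ] F) × E × F}
    (hz : z ∈ convexHull ℝ {p : (E ⊗[ℝ] F) × E × F | ∃ x ∈ P, ∃ y ∈ Q, p = (x ⊗ₜ[ℝ] y, x, y)})
    (h2 : z.2.1 = v) (h3 : z.2.2 = w) : z.1 = v ⊗ₜ[ℝ] w := by
  rw [convexHull_eq] at hz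
  obtain ⟨ι, t, c, zf, hc, hsum, hmem, hcm⟩ := hz
  rw [Finset.centerMass_eq_of_sum_1 _ _ hsum] at hcm
  set x : ι → E := fun i => (zf i).2.1 with hxdef
  set y : ι → F := fun i => (zf i).2.2 with hydef
  have hzf : ∀ i ∈ t, zf i = (x i ⊗ₜ[ℝ] y i, x i, y i) ∧ x i ∈ P ∧ y i ∈ Q := by
    intro i hi
    obtain ⟨a, haP, b, hbQ, heq⟩ := hmem i hi
    refine ⟨?_, ?_, ?_⟩ <;> simp [hxdef, hydef, heq, haP, hbQ]
  have hx2 : (∑ i ∈ t, c i • x i) = v := by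
    rw [← h2, ← hcm]
    simp [Finset.sum_apply, Prod.snd_sum, Prod.fst_sum]
    rfl
  have hy2 : (∑ i ∈ t, c i • y i) = w := by
    rw [← h3, ← hcm]
    simp [Prod.snd_sum]
    rfl
  have hxv := extreme_combo hPc hv t c x hc hsum (fun i hi => ((hzf i hi).2).1) hx2
  have hyw := extreme_combo hQc hw t c y hc hsum (fun i hi => ((hzf i hi).2).2) hy2
  have : z.1 = ∑ i ∈ t, c i • (x i ⊗ₜ[ℝ] y i) := by
    rw [← hcm]
    rw [Prod.fst_sum]
    refine Finset.sum_congr rfl fun i hi => ?_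
    rw [(hzf i hi).1]
    rfl
  rw [this]
  have : (∑ i ∈ t, c i • (x i ⊗ₜ[ℝ] y i)) = ∑ i ∈ t, c i • (v ⊗ₜ[ℝ] w) := by
    refine Finset.sum_congr rfl fun i hi => ?_
    by_cases hci : c i = 0
    · rw [hci, zero_smul, zero_smul]
    · rw [hxv i hi hci, hyw i hi hci]
  rw [this, ← Finset.sum_smul, hsum, one_smul]

/-- The extreme points of the tensor product polytope
`P⊗Q = conv{(x ⊗ y, x, y) : x ∈ P, y ∈ Q} ⊆ (E ⊗ F) × E × F` are exactly the points
`(v ⊗ w, v, w)` with `v` an extreme point of `P` and `w` an extreme point of `Q`. -/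
theorem tensor_polytope_extremePoints
    {E F : Type*} [AddCommGroup E] [Module ℝ E] [FiniteDimensional ℝ E]
    [AddCommGroup F] [Module ℝ F] [FiniteDimensional ℝ F]
    (P : Set E) (Q : Set F)
    (hP : ∃ SP : Finset E, P = convexHull ℝ (SP : Set E)) (hPne : P.Nonempty)
    (hQ : ∃ SQ : Finset F, Q = convexHull ℝ (SQ : Set F)) (hQne : Q.Nonempty) :
    Set.extremePoints ℝ
        (convexHull ℝ {p : (E ⊗[ℝ] F) × E × F | ∃ x ∈ P, ∃ y ∈ Q, p = (x ⊗ₜ[ℝ] y, x, y)}) =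
      {p : (E ⊗[ℝ] F) × E × F |
        ∃ v ∈ Set.extremePoints ℝ P, ∃ w ∈ Set.extremePoints ℝ Q, p = (v ⊗ₜ[ℝ] w, v, w)} := by
  obtain ⟨SP, hSP⟩ := hP
  obtain ⟨SQ, hSQ⟩ := hQ
  have hPc : Convex ℝ P := hSP ▸ convex_convexHull ℝ _
  have hQc : Convex ℝ Q := hSQ ▸ convex_convexHull ℝ _
  set S : Set ((E ⊗[ℝ] F) × E × F) :=
    {p : (E ⊗[ℝ] F) × E × F | ∃ x ∈ P, ∃ y ∈ Q, p = (x ⊗ₜ[ℝ] y, x, y)} with hSdef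
  -- projection containment
  have hproj : convexHull ℝ S ⊆ {z : (E ⊗[ℝ] F) × E × F | z.2.1 ∈ P ∧ z.2.2 ∈ Q} := by
    apply convexHull_min
    · rintro p ⟨a, haP, b, hbQ, rfl⟩; exact ⟨haP, hbQ⟩
    · have : {z : (E ⊗[ℝ] F) × E × F | z.2.1 ∈ P ∧ z.2.2 ∈ Q}
          = (LinearMap.snd ℝ (E ⊗[ℝ] F) (E × F)) ⁻¹' (P ×ˢ Q) := by
        ext z; simp [Set.mem_prod]
      rw [this]
      exact (hPc.prod hQc).linear_preimage _
  ext p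
  constructor
  · intro hp
    have hpS : p ∈ S := extremePoints_convexHull_subset hp
    obtain ⟨a, haP, b, hbQ, rfl⟩ := hpS
    refine ⟨a, mem_extremePoints.2 ⟨haP, ?_⟩, b, mem_extremePoints.2 ⟨hbQ, ?_⟩, rfl⟩
    · intro x₁ hx₁ x₂ hx₂ hseg
      obtain ⟨s, r, hs, hr, hsr, heq⟩ := hseg
      have h1 : (x₁ ⊗ₜ[ℝ] b, x₁, b) ∈ convexHull ℝ S :=
        subset_convexHull ℝ S ⟨x₁, hx₁, b, hbQ, rfl⟩
      have h2 : (x₂ ⊗ₜ[ℝ] b, x₂, b) ∈ convexHull ℝ S :=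
        subset_convexHull ℝ S ⟨x₂, hx₂, b, hbQ, rfl⟩
      have hseg' : (a ⊗ₜ[ℝ] b, a, b) ∈
          openSegment ℝ (x₁ ⊗ₜ[ℝ] b, x₁, b) (x₂ ⊗ₜ[ℝ] b, (x₂ : E), b) := by
        refine ⟨s, r, hs, hr, hsr, ?_⟩
        have : (s • x₁ + r • x₂) ⊗ₜ[ℝ] b = a ⊗ₜ[ℝ] b := by rw [heq]
        rw [add_tmul, ← smul_tmul', ← smul_tmul'] at this
        ext <;> simp_all [Prod.add_def, Prod.smul_def, smul_tmul', ← add_smul]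
      obtain ⟨e1, e2⟩ := (mem_extremePoints.1 hp).2 _ h1 _ h2 hseg'
      exact ⟨congrArg (fun z => z.2.1) e1, congrArg (fun z => z.2.1) e2⟩
    · intro y₁ hy₁ y₂ hy₂ hseg
      obtain ⟨s, r, hs, hr, hsr, heq⟩ := hseg
      have h1 : (a ⊗ₜ[ℝ] y₁, a, y₁) ∈ convexHull ℝ S :=
        subset_convexHull ℝ S ⟨a, haP, y₁, hy₁, rfl⟩
      have h2 : (a ⊗ₜ[ℝ] y₂, a, y₂) ∈ convexHull ℝ S :=
        subset_convexHull ℝ S ⟨a, haP, y₂, hy₂, rfl⟩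
      have hseg' : (a ⊗ₜ[ℝ] b, a, b) ∈
          openSegment ℝ (a ⊗ₜ[ℝ] y₁, a, y₁) (a ⊗ₜ[ℝ] y₂, a, y₂) := by
        refine ⟨s, r, hs, hr, hsr, ?_⟩
        have : a ⊗ₜ[ℝ] (s • y₁ + r • y₂) = a ⊗ₜ[ℝ] b := by rw [heq]
        rw [tmul_add, tmul_smul] at this
        ext <;> simp_all [Prod.add_def, Prod.smul_def, ← add_smul]
      obtain ⟨e1, e2⟩ := (mem_extremePoints.1 hp).2 _ h1 _ h2 hseg'
      exact ⟨congrArg (fun z => z.2.2) e1, congrArg (fun z => z.2.2) e2⟩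
  · rintro ⟨v, hv, w, hw, rfl⟩
    refine mem_extremePoints.2 ⟨subset_convexHull ℝ S ⟨v, hv.1, w, hw.1, rfl⟩, ?_⟩
    intro z₁ hz₁ z₂ hz₂ hseg
    obtain ⟨s, r, hs, hr, hsr, heq⟩ := hseg
    have hvseg : v ∈ openSegment ℝ z₁.2.1 z₂.2.1 := by
      refine ⟨s, r, hs, hr, hsr, ?_⟩
      have := congrArg (fun z => z.2.1) heq
      simpa [Prod.add_def, Prod.smul_def] using this
    have hwseg : w ∈ openSegment ℝ z₁.2.2 z₂.2.2 := by
      refine ⟨s, r, hs, hr, hsr, ?_⟩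
      have := congrArg (fun z => z.2.2) heq
      simpa [Prod.add_def, Prod.smul_def] using this
    obtain ⟨hv1, hv2⟩ := (mem_extremePoints.1 hv).2 _ (hproj hz₁).1 _ (hproj hz₂).1 hvseg
    obtain ⟨hw1, hw2⟩ := (mem_extremePoints.1 hw).2 _ (hproj hz₁).2 _ (hproj hz₂).2 hwseg
    constructor
    · have := fiber_eq hPc hQc hv hw hz₁ hv1 hw1
      exact Prod.ext this (Prod.ext hv1 hw1)
    · have := fiber_eq hPc hQc hv hw hz₂ hv2 hw2
      exact Prod.ext this (Prod.ext hv2 hw2)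
end

section
/- Let E and F be finite-dimensional real vector spaces and let P ⊆ E, Q ⊆ F be nonempty polytopes. Define the tensor product polytope P⊗Q ⊆ (E ⊗ F) × E × F as the convex hull of {(x ⊗ y, x, y) : x ∈ P, y ∈ Q}. Then dim(P⊗Q) = (dim P)·(dim Q) + dim P + dim Q, where the dimension of a nonempty convex set is the rank over ℝ of its vector span. -/
set_option maxHeartbeats 2000000
open TensorProduct

def Submodule.prodEquivAux {R M N : Type*} [Semiring R] [AddCommMonoid M] [AddCommMonoid N]
    [Module R M] [Module R N] (p : Submodule R M) (q : Submodule R N) :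
    ↥(p.prod q) ≃ₗ[R] ↥p × ↥q where
  toFun x := (⟨x.1.1, x.2.1⟩, ⟨x.1.2, x.2.2⟩)
  invFun y := ⟨(y.1.1, y.2.1), ⟨y.1.2, y.2.2⟩⟩
  map_add' _ _ := rfl
  map_smul' _ _ := rfl
  left_inv _ := rfl
  right_inv _ := rfl

noncomputable def phiAux {E F : Type*} [AddCommGroup E] [Module ℝ E]
    [AddCommGroup F] [Module ℝ F] (x0 : E) (y0 : F) :
    ((E ⊗[ℝ] F) × E × F) ≃ₗ[ℝ] ((E ⊗[ℝ] F) × E × F) where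
  toFun z := (z.1 - z.2.1 ⊗ₜ[ℝ] y0 - x0 ⊗ₜ[ℝ] z.2.2, z.2)
  invFun z := (z.1 + z.2.1 ⊗ₜ[ℝ] y0 + x0 ⊗ₜ[ℝ] z.2.2, z.2)
  map_add' a b := by
    ext
    · simp [TensorProduct.add_tmul, TensorProduct.tmul_add]; abel
    · rfl
    · rfl
  map_smul' c a := by
    ext
    · simp [TensorProduct.smul_tmul', TensorProduct.tmul_smul, smul_sub]
    · rfl
    · rfl
  left_inv z := by ext <;> simp <;> abel
  right_inv z := by ext <;> simp <;> abel

lemma finrank_span_image2_tmul {E F : Type*} [AddCommGroup E] [Module ℝ E] [FiniteDimensional ℝ E]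
    [AddCommGroup F] [Module ℝ F] [FiniteDimensional ℝ F] (A : Set E) (B : Set F) :
    Module.finrank ℝ ↥(Submodule.span ℝ (Set.image2 (· ⊗ₜ[ℝ] ·) A B)) =
      Module.finrank ℝ ↥(Submodule.span ℝ A) * Module.finrank ℝ ↥(Submodule.span ℝ B) := by
  have e : ∀ (s : Set E) (t : Set F), Submodule.span ℝ (Set.image2 (· ⊗ₜ[ℝ] ·) s t) =
      Submodule.map₂ (TensorProduct.mk ℝ E F) (Submodule.span ℝ s) (Submodule.span ℝ t) :=
    fun s t => (Submodule.map₂_span_span ℝ (TensorProduct.mk ℝ E F) s t).symm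
  have h1 : Submodule.span ℝ (Set.image2 (· ⊗ₜ[ℝ] ·) A B) =
      LinearMap.range (mapIncl (Submodule.span ℝ A) (Submodule.span ℝ B)) := by
    rw [range_mapIncl, e]
  rw [h1, LinearMap.finrank_range_of_inj
    (Module.Flat.tensorProduct_mapIncl_injective_of_right _ _),
    Module.finrank_tensorProduct]

/-- `dim(P⊗Q) = (dim P)·(dim Q) + dim P + dim Q`, where
`P⊗Q = conv{(x ⊗ y, x, y) : x ∈ P, y ∈ Q} ⊆ (E ⊗ F) × E × F` and the dimension of a
nonempty convex set is the rank of its vector span. -/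
theorem tensor_polytope_dim
    {E F : Type*} [AddCommGroup E] [Module ℝ E] [FiniteDimensional ℝ E]
    [AddCommGroup F] [Module ℝ F] [FiniteDimensional ℝ F]
    (P : Set E) (Q : Set F)
    (hP : ∃ SP : Finset E, P = convexHull ℝ (SP : Set E)) (hPne : P.Nonempty)
    (hQ : ∃ SQ : Finset F, Q = convexHull ℝ (SQ : Set F)) (hQne : Q.Nonempty) :
    Module.finrank ℝ ↥(vectorSpan ℝ
        (convexHull ℝ {p : (E ⊗[ℝ] F) × E × F | ∃ x ∈ P, ∃ y ∈ Q, p = (x ⊗ₜ[ℝ] y, x, y)})) =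
      Module.finrank ℝ ↥(vectorSpan ℝ P) * Module.finrank ℝ ↥(vectorSpan ℝ Q)
        + Module.finrank ℝ ↥(vectorSpan ℝ P) + Module.finrank ℝ ↥(vectorSpan ℝ Q) := by
  classical
  obtain ⟨x0, hx0⟩ := hPne
  obtain ⟨y0, hy0⟩ := hQne
  set T : Set ((E ⊗[ℝ] F) × E × F) :=
    {p | ∃ x ∈ P, ∃ y ∈ Q, p = (x ⊗ₜ[ℝ] y, x, y)} with hTdef
  set A : Set E := (fun x => x - x0) '' P with hAdef
  set B : Set F := (fun y => y - y0) '' Q with hBdef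
  have hvP : vectorSpan ℝ P = Submodule.span ℝ A := by
    rw [vectorSpan_eq_span_vsub_set_right ℝ hx0]
    simp only [vsub_eq_sub, hAdef]
  have hvQ : vectorSpan ℝ Q = Submodule.span ℝ B := by
    rw [vectorSpan_eq_span_vsub_set_right ℝ hy0]
    simp only [vsub_eq_sub, hBdef]
  have hT0 : ((x0 ⊗ₜ[ℝ] y0, x0, y0) : (E ⊗[ℝ] F) × E × F) ∈ T := ⟨x0, hx0, y0, hy0, rfl⟩
  have hconv : vectorSpan ℝ (convexHull ℝ T) = vectorSpan ℝ T := by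
    rw [← direction_affineSpan, affineSpan_convexHull, direction_affineSpan]
  have hTspan : vectorSpan ℝ T =
      Submodule.span ℝ ((· -ᵥ (x0 ⊗ₜ[ℝ] y0, x0, y0)) '' T) :=
    vectorSpan_eq_span_vsub_set_right ℝ hT0
  -- the key computation
  have hcomp : ∀ (x : E) (y : F),
      (phiAux x0 y0) ((x ⊗ₜ[ℝ] y, x, y) -ᵥ (x0 ⊗ₜ[ℝ] y0, x0, y0)) =
        ((x - x0) ⊗ₜ[ℝ] (y - y0), x - x0, y - y0) := by
    intro x y
    simp only [vsub_eq_sub, phiAux, LinearEquiv.coe_mk, Prod.mk_sub_mk, Prod.mk.injEq,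
      Prod.fst_sub, Prod.snd_sub]
    refine Prod.ext ?_ rfl; dsimp only [LinearMap.coe_mk, AddHom.coe_mk]
    simp only [TensorProduct.sub_tmul, TensorProduct.tmul_sub]
    abel
  set S : Set ((E ⊗[ℝ] F) × E × F) :=
    {z | ∃ u ∈ A, ∃ v ∈ B, z = (u ⊗ₜ[ℝ] v, u, v)} with hSdef
  have himg : (phiAux x0 y0) '' ((· -ᵥ (x0 ⊗ₜ[ℝ] y0, x0, y0)) '' T) = S := by
    ext z
    constructor
    · rintro ⟨w, ⟨p, ⟨x, hx, y, hy, rfl⟩, rfl⟩, rfl⟩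
      exact ⟨x - x0, ⟨x, hx, rfl⟩, y - y0, ⟨y, hy, rfl⟩, hcomp x y⟩
    · rintro ⟨u, ⟨x, hx, rfl⟩, v, ⟨y, hy, rfl⟩, rfl⟩
      exact ⟨(x ⊗ₜ[ℝ] y, x, y) -ᵥ (x0 ⊗ₜ[ℝ] y0, x0, y0),
        ⟨(x ⊗ₜ[ℝ] y, x, y), ⟨x, hx, y, hy, rfl⟩, rfl⟩, hcomp x y⟩
  -- span of S is a product
  have h0A : (0 : E) ∈ A := ⟨x0, hx0, sub_self x0⟩
  have h0B : (0 : F) ∈ B := ⟨y0, hy0, sub_self y0⟩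
  set TUV : Submodule ℝ (E ⊗[ℝ] F) := Submodule.span ℝ (Set.image2 (· ⊗ₜ[ℝ] ·) A B) with hTUV
  have hspanS : Submodule.span ℝ S =
      TUV.prod ((Submodule.span ℝ A).prod (Submodule.span ℝ B)) := by
    apply le_antisymm
    · rw [Submodule.span_le]
      rintro z ⟨u, hu, v, hv, rfl⟩
      exact ⟨Submodule.subset_span (Set.mem_image2_of_mem hu hv),
        Submodule.subset_span hu, Submodule.subset_span hv⟩
    · set W := Submodule.span ℝ S with hW
      have hA' : ∀ u ∈ A, ((0 : E ⊗[ℝ] F), u, (0 : F)) ∈ W := by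
        intro u hu
        have h : ((u ⊗ₜ[ℝ] (0 : F), u, (0 : F)) : (E ⊗[ℝ] F) × E × F) ∈ W :=
          Submodule.subset_span ⟨u, hu, 0, h0B, rfl⟩
        simpa [TensorProduct.tmul_zero] using h
      have hB' : ∀ v ∈ B, ((0 : E ⊗[ℝ] F), (0 : E), v) ∈ W := by
        intro v hv
        have h : (((0 : E) ⊗ₜ[ℝ] v, (0 : E), v) : (E ⊗[ℝ] F) × E × F) ∈ W :=
          Submodule.subset_span ⟨0, h0A, v, hv, rfl⟩
        simpa [TensorProduct.zero_tmul] using h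
      have hAB : ∀ u ∈ A, ∀ v ∈ B, ((u ⊗ₜ[ℝ] v : E ⊗[ℝ] F), (0 : E), (0 : F)) ∈ W := by
        intro u hu v hv
        have h1 : ((u ⊗ₜ[ℝ] v, u, v) : (E ⊗[ℝ] F) × E × F) ∈ W :=
          Submodule.subset_span ⟨u, hu, v, hv, rfl⟩
        have h2 := W.sub_mem (W.sub_mem h1 (hA' u hu)) (hB' v hv)
        have h3 : ((u ⊗ₜ[ℝ] v : E ⊗[ℝ] F), (0 : E × F)) ∈ W := by simpa using h2
        exact h3
      set j1 : (E ⊗[ℝ] F) →ₗ[ℝ] (E ⊗[ℝ] F) × E × F := LinearMap.inl ℝ _ _ with hj1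
      set j2 : E →ₗ[ℝ] (E ⊗[ℝ] F) × E × F :=
        (LinearMap.inr ℝ (E ⊗[ℝ] F) (E × F)).comp (LinearMap.inl ℝ E F) with hj2
      set j3 : F →ₗ[ℝ] (E ⊗[ℝ] F) × E × F :=
        (LinearMap.inr ℝ (E ⊗[ℝ] F) (E × F)).comp (LinearMap.inr ℝ E F) with hj3
      have hU : Submodule.span ℝ A ≤ W.comap j2 :=
        Submodule.span_le.mpr fun u hu => hA' u hu
      have hV : Submodule.span ℝ B ≤ W.comap j3 :=
        Submodule.span_le.mpr fun v hv => hB' v hv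
      have hTU : TUV ≤ W.comap j1 := by
        rw [hTUV, Submodule.span_le]
        rintro z ⟨u, hu, v, hv, rfl⟩
        exact hAB u hu v hv
      rintro ⟨t, u, v⟩ ⟨ht, hu, hv⟩
      have hz : ((t, u, v) : (E ⊗[ℝ] F) × E × F) = j1 t + j2 u + j3 v := by
        simp [hj1, hj2, hj3, Prod.ext_iff]
      rw [hz]
      exact W.add_mem (W.add_mem (hTU ht) (hU hu)) (hV hv)
  -- put everything together
  haveI inst1 : FiniteDimensional ℝ (E ⊗[ℝ] F) := Module.Finite.tensorProduct ℝ E F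
  set N : Submodule ℝ ((E ⊗[ℝ] F) × E × F) :=
    Submodule.span ℝ ((· -ᵥ (x0 ⊗ₜ[ℝ] y0, x0, y0)) '' T) with hN
  have key : N.map ((phiAux x0 y0) : ((E ⊗[ℝ] F) × E × F) →ₗ[ℝ] ((E ⊗[ℝ] F) × E × F)) =
      TUV.prod ((Submodule.span ℝ A).prod (Submodule.span ℝ B)) := by
    rw [hN, Submodule.map_span]
    rw [show (⇑(((phiAux x0 y0) : ((E ⊗[ℝ] F) × E × F) →ₗ[ℝ] ((E ⊗[ℝ] F) × E × F)))
        : ((E ⊗[ℝ] F) × E × F) → ((E ⊗[ℝ] F) × E × F)) = ⇑(phiAux x0 y0) from rfl]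
    rw [himg, hspanS]
  have hfr := LinearEquiv.finrank_map_eq (phiAux x0 y0) N
  rw [key] at hfr
  rw [hconv, hTspan, ← hfr]
  rw [(Submodule.prodEquivAux TUV ((Submodule.span ℝ A).prod (Submodule.span ℝ B))).finrank_eq,
    Module.finrank_prod,
    (Submodule.prodEquivAux (Submodule.span ℝ A) (Submodule.span ℝ B)).finrank_eq,
    Module.finrank_prod, hTUV, finrank_span_image2_tmul, hvP, hvQ]
  ring
end

section
/- Let E, F, G be finite-dimensional real vector spaces, let P ⊆ E and Q ⊆ F be nonempty polytopes whose affine spans are E and F respectively, and let R ⊆ G be a polytope. Define P⊗Q ⊆ (E ⊗ F) × E × F as the convex hull of {(x ⊗ y, x, y) : x ∈ P, y ∈ Q}. Let ψ : E × F → G be a bi-affine map (for every fixed x ∈ E the map y ↦ ψ(x,y) is affine, and for every fixed y ∈ F the map x ↦ ψ(x,y) is affine) such that ψ(x,y) ∈ R for all x ∈ P, y ∈ Q. Then there exists a unique affine map φ : (E ⊗ F) × E × F → G such that φ(x ⊗ y, x, y) = ψ(x,y) for all x ∈ E and y ∈ F, and this φ satisfies φ(P⊗Q) ⊆ R. -/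
open TensorProduct

section Aux
variable {E F G : Type*} [AddCommGroup E] [Module ℝ E]
  [AddCommGroup F] [Module ℝ F] [AddCommGroup G] [Module ℝ G]

theorem affine_eval (f : F →ᵃ[ℝ] G) (y : F) : f y = f.linear y + f 0 := by
  have := f.map_vadd 0 y
  simpa [vadd_eq_add] using this

theorem tensor_aux_exists (ψ : E × F → G)
    (hψ₁ : ∀ x : E, ∃ g : F →ᵃ[ℝ] G, ∀ y : F, ψ (x, y) = g y)
    (hψ₂ : ∀ y : F, ∃ g : E →ᵃ[ℝ] G, ∀ x : E, ψ (x, y) = g x) :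
    ∃ φ : ((E ⊗[ℝ] F) × E × F) →ᵃ[ℝ] G,
      ∀ (x : E) (y : F), φ (x ⊗ₜ[ℝ] y, x, y) = ψ (x, y) := by
  classical
  choose g1 hg1 using hψ₁
  choose g2 hg2 using hψ₂
  set b : E → F → G := fun x y => ψ (x, y) - ψ (x, 0) - ψ (0, y) + ψ (0, 0) with hb
  have hb1 : ∀ x y, b x y = (g1 x).linear y - (g1 0).linear y := by
    intro x y
    simp only [hb, hg1 x, hg1 0, affine_eval (g1 x) y, affine_eval (g1 0) y]
    abel
  have hb2 : ∀ x y, b x y = (g2 y).linear x - (g2 0).linear x := by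
    intro x y
    simp only [hb, hg2 y, hg2 0, affine_eval (g2 y) x, affine_eval (g2 0) x]
    abel
  set B : E →ₗ[ℝ] F →ₗ[ℝ] G := LinearMap.mk₂ ℝ b
    (fun x x' y => by simp [hb2, map_add]; abel)
    (fun c x y => by simp [hb2, map_smul, smul_sub])
    (fun x y y' => by simp [hb1, map_add]; abel)
    (fun c x y => by simp [hb1, map_smul, smul_sub]) with hB
  set Λ : ((E ⊗[ℝ] F) × E × F) →ₗ[ℝ] G :=
    (TensorProduct.lift B) ∘ₗ (LinearMap.fst ℝ _ _) +
    (g2 0).linear ∘ₗ ((LinearMap.fst ℝ E F) ∘ₗ (LinearMap.snd ℝ _ _)) +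
    (g1 0).linear ∘ₗ ((LinearMap.snd ℝ E F) ∘ₗ (LinearMap.snd ℝ _ _)) with hΛ
  refine ⟨{ toFun := fun p => Λ p + ψ (0, 0), linear := Λ,
            map_vadd' := by intro p v; simp [vadd_eq_add, map_add]; abel }, ?_⟩
  intro x y
  show Λ (x ⊗ₜ[ℝ] y, x, y) + ψ (0, 0) = ψ (x, y)
  have hx : (g2 0).linear x = ψ (x, 0) - ψ (0, 0) := by
    rw [hg2 0 x, hg2 0 0, affine_eval (g2 0) x]; abel
  have hy : (g1 0).linear y = ψ (0, y) - ψ (0, 0) := by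
    rw [hg1 0 y, hg1 0 0, affine_eval (g1 0) y]; abel
  simp only [hΛ, LinearMap.add_apply, LinearMap.comp_apply, LinearMap.fst_apply,
    LinearMap.snd_apply, TensorProduct.lift.tmul, hB, LinearMap.mk₂_apply, hb, hx, hy]
  abel

theorem tensor_aux_unique (ψ : E × F → G)
    (φ₁ φ₂ : ((E ⊗[ℝ] F) × E × F) →ᵃ[ℝ] G)
    (h₁ : ∀ (x : E) (y : F), φ₁ (x ⊗ₜ[ℝ] y, x, y) = ψ (x, y))
    (h₂ : ∀ (x : E) (y : F), φ₂ (x ⊗ₜ[ℝ] y, x, y) = ψ (x, y)) : φ₁ = φ₂ := by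
  have key : ∀ (φ : ((E ⊗[ℝ] F) × E × F) →ᵃ[ℝ] G),
      (∀ (x : E) (y : F), φ (x ⊗ₜ[ℝ] y, x, y) = ψ (x, y)) →
      ∀ v : (E ⊗[ℝ] F) × E × F, φ.linear v = φ v - ψ (0, 0) := by
    intro φ hφ v
    have h0 : φ (0 : (E ⊗[ℝ] F) × E × F) = ψ (0, 0) := by
      have := hφ 0 0; simp at this; exact this
    have := φ.map_vadd (0, 0, 0) v
    simp only [vadd_eq_add, Prod.mk_zero_zero, add_zero] at this
    rw [this, h0]; abel
  have hlinxy : ∀ (φ : ((E ⊗[ℝ] F) × E × F) →ᵃ[ℝ] G),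
      (∀ (x : E) (y : F), φ (x ⊗ₜ[ℝ] y, x, y) = ψ (x, y)) →
      ∀ (x : E) (y : F), φ.linear (x ⊗ₜ[ℝ] y, 0, 0)
        = ψ (x, y) - ψ (x, 0) - ψ (0, y) + ψ (0, 0) := by
    intro φ hφ x y
    have e : ((x ⊗ₜ[ℝ] y, 0, 0) : (E ⊗[ℝ] F) × E × F)
        = (x ⊗ₜ[ℝ] y, x, y) - (x ⊗ₜ[ℝ] (0:F), x, 0) - ((0:E) ⊗ₜ[ℝ] y, 0, y) := by
      simp [Prod.ext_iff]
    rw [e, map_sub, map_sub, key φ hφ _, key φ hφ _, key φ hφ _,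
      hφ x y, hφ x 0, hφ 0 y]
    abel
  -- equality of linear parts
  have hlin : φ₁.linear = φ₂.linear := by
    refine LinearMap.ext fun v => ?_
    obtain ⟨t, x, y⟩ := v
    have e : ((t, x, y) : (E ⊗[ℝ] F) × E × F)
        = (t, 0, 0) + (0, x, 0) + (0, 0, y) := by simp [Prod.ext_iff]
    have ht : φ₁.linear (t, 0, 0) = φ₂.linear (t, 0, 0) := by
      have hT : φ₁.linear ∘ₗ LinearMap.inl ℝ (E ⊗[ℝ] F) (E × F)
          = φ₂.linear ∘ₗ LinearMap.inl ℝ (E ⊗[ℝ] F) (E × F) :=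
        TensorProduct.ext' fun x y => by
          simp only [LinearMap.comp_apply, LinearMap.inl_apply]
          rw [show ((x ⊗ₜ[ℝ] y, (0 : E × F)) : (E ⊗[ℝ] F) × E × F)
              = (x ⊗ₜ[ℝ] y, 0, 0) from rfl,
            hlinxy φ₁ h₁, hlinxy φ₂ h₂]
      have := LinearMap.ext_iff.mp hT t
      simp at this; exact this
    have hx : φ₁.linear (0, x, 0) = φ₂.linear (0, x, 0) := by
      have e2 : ((0, x, 0) : (E ⊗[ℝ] F) × E × F) = (x ⊗ₜ[ℝ] (0:F), x, 0) := by simp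
      rw [e2, key φ₁ h₁, key φ₂ h₂, h₁, h₂]
    have hy : φ₁.linear (0, 0, y) = φ₂.linear (0, 0, y) := by
      have e2 : ((0, 0, y) : (E ⊗[ℝ] F) × E × F) = ((0:E) ⊗ₜ[ℝ] y, 0, y) := by simp
      rw [e2, key φ₁ h₁, key φ₂ h₂, h₁, h₂]
    rw [e, map_add, map_add, map_add, map_add, ht, hx, hy]
  ext p
  have v1 := φ₁.map_vadd (0, 0, 0) p
  have v2 := φ₂.map_vadd (0, 0, 0) p
  simp only [vadd_eq_add, Prod.mk_zero_zero, add_zero] at v1 v2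
  have h01 : φ₁ (0 : (E ⊗[ℝ] F) × E × F) = ψ (0, 0) := by
    have := h₁ 0 0; simp at this; exact this
  have h02 : φ₂ (0 : (E ⊗[ℝ] F) × E × F) = ψ (0, 0) := by
    have := h₂ 0 0; simp at this; exact this
  rw [v1, v2, h01, h02, hlin]

end Aux

/-- Universal property of the tensor product polytope: a bi-affine map
`ψ : E × F → G` sending `P × Q` into `R` factors through a unique affine map
`φ : (E ⊗ F) × E × F → G` with `φ(x ⊗ y, x, y) = ψ(x,y)`, and `φ` maps `P⊗Q` into `R`. -/
theorem tensor_polytope_universal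
    {E F G : Type*} [AddCommGroup E] [Module ℝ E] [FiniteDimensional ℝ E]
    [AddCommGroup F] [Module ℝ F] [FiniteDimensional ℝ F]
    [AddCommGroup G] [Module ℝ G] [FiniteDimensional ℝ G]
    (P : Set E) (Q : Set F) (R : Set G)
    (hP : ∃ SP : Finset E, P = convexHull ℝ (SP : Set E)) (hPne : P.Nonempty)
    (hPspan : affineSpan ℝ P = ⊤)
    (hQ : ∃ SQ : Finset F, Q = convexHull ℝ (SQ : Set F)) (hQne : Q.Nonempty)
    (hQspan : affineSpan ℝ Q = ⊤)
    (hR : ∃ SR : Finset G, R = convexHull ℝ (SR : Set G))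
    (ψ : E × F → G)
    (hψ₁ : ∀ x : E, ∃ g : F →ᵃ[ℝ] G, ∀ y : F, ψ (x, y) = g y)
    (hψ₂ : ∀ y : F, ∃ g : E →ᵃ[ℝ] G, ∀ x : E, ψ (x, y) = g x)
    (hψR : ∀ x ∈ P, ∀ y ∈ Q, ψ (x, y) ∈ R) :
    ∃ φ : ((E ⊗[ℝ] F) × E × F) →ᵃ[ℝ] G,
      (∀ (x : E) (y : F), φ (x ⊗ₜ[ℝ] y, x, y) = ψ (x, y)) ∧
      (∀ p ∈ convexHull ℝ {p : (E ⊗[ℝ] F) × E × F | ∃ x ∈ P, ∃ y ∈ Q, p = (x ⊗ₜ[ℝ] y, x, y)},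
        φ p ∈ R) ∧
      (∀ φ' : ((E ⊗[ℝ] F) × E × F) →ᵃ[ℝ] G,
        (∀ (x : E) (y : F), φ' (x ⊗ₜ[ℝ] y, x, y) = ψ (x, y)) → φ' = φ) := by
  classical
  obtain ⟨φ, hφ⟩ := tensor_aux_exists ψ hψ₁ hψ₂
  refine ⟨φ, hφ, ?_, fun φ' hφ' => tensor_aux_unique ψ φ' φ hφ' hφ⟩
  intro p hp
  obtain ⟨SR, rfl⟩ := hR
  have hconv : Convex ℝ (convexHull ℝ (SR : Set G)) := convex_convexHull ℝ _
  have himg : φ '' {p : (E ⊗[ℝ] F) × E × F | ∃ x ∈ P, ∃ y ∈ Q, p = (x ⊗ₜ[ℝ] y, x, y)}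
      ⊆ convexHull ℝ (SR : Set G) := by
    rintro _ ⟨q, ⟨x, hx, y, hy, rfl⟩, rfl⟩
    rw [hφ x y]
    exact hψR x hx y hy
  have := AffineMap.image_convexHull
    (s := {p : (E ⊗[ℝ] F) × E × F | ∃ x ∈ P, ∃ y ∈ Q, p = (x ⊗ₜ[ℝ] y, x, y)}) (f := φ)
  have hmem : φ p ∈ φ '' convexHull ℝ
      {p : (E ⊗[ℝ] F) × E × F | ∃ x ∈ P, ∃ y ∈ Q, p = (x ⊗ₜ[ℝ] y, x, y)} :=
    Set.mem_image_of_mem φ hp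
  rw [this] at hmem
  exact convexHull_min himg hconv hmem
end

section
/- Let m, n ≥ 1 and let □_m = [−1,1]^m ⊆ ℝ^m and □_n = [−1,1]^n ⊆ ℝ^n be the standard cubes. For an affine map f : ℝ^m → ℝ^n, write its j-th coordinate as f(x)_j = ⟨a_j, x⟩ + c_j with a_j ∈ ℝ^m, c_j ∈ ℝ. Then f(□_m) ⊆ □_n if and only if for every j, Σ_{i=1}^{m} |a_j(i)| + |c_j| ≤ 1. Consequently, the linear equivalence f ↦ ((a_1,c_1),…,(a_n,c_n)) from the space of affine maps ℝ^m → ℝ^n to (ℝ^{m+1})^n carries Hom(□_m, □_n) bijectively onto the n-fold product of the (m+1)-dimensional cross-polytope ◇_{m+1} = {z ∈ ℝ^{m+1} : Σ_{i=1}^{m+1} |z_i| ≤ 1}, i.e. Hom(□_m,□_n) ≅ (◇_{m+1})^n. -/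
def stdCube (k : ℕ) : Set (Fin k → ℝ) := {x | ∀ i, x i ∈ Set.Icc (-1 : ℝ) 1}

/-- Part 1: the cube-mapping criterion. -/
lemma part1_aux (m n : ℕ) (f : (Fin m → ℝ) →ᵃ[ℝ] (Fin n → ℝ)) (a : Fin n → Fin m → ℝ)
    (c : Fin n → ℝ)
    (hf : ∀ (x : Fin m → ℝ) (j : Fin n), f x j = (∑ i, a j i * x i) + c j) :
    (∀ x ∈ stdCube m, f x ∈ stdCube n) ↔ ∀ j, (∑ i, |a j i|) + |c j| ≤ 1 := by
  constructor
  · intro h j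
    set s : ℝ := if 0 ≤ c j then 1 else -1 with hs
    set x : Fin m → ℝ := fun i => if 0 ≤ a j i then s else -s with hx
    have hxcube : x ∈ stdCube m := by
      intro i
      simp only [hx, hs]
      split_ifs <;> norm_num
    have hval : f x j = s * (∑ i, |a j i|) + c j := by
      rw [hf]
      congr 1
      rw [Finset.mul_sum]
      refine Finset.sum_congr rfl fun i _ => ?_
      simp only [hx]
      rcases le_or_gt 0 (a j i) with h1 | h1
      · rw [if_pos h1, abs_of_nonneg h1]; ring
      · rw [if_neg (not_le.mpr h1), abs_of_neg h1]; ring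
    have hmem := h x hxcube j
    simp only [stdCube, Set.mem_setOf_eq, Set.mem_Icc] at hmem
    rw [hval] at hmem
    rcases le_or_gt 0 (c j) with h2 | h2
    · rw [abs_of_nonneg h2]
      have : s = 1 := if_pos h2
      rw [this] at hmem; linarith [hmem.2]
    · rw [abs_of_neg h2]
      have : s = -1 := if_neg (not_le.mpr h2)
      rw [this] at hmem; linarith [hmem.1]
  · intro h x hx j
    have hb : |f x j| ≤ 1 := by
      rw [hf]
      calc |(∑ i, a j i * x i) + c j| ≤ |∑ i, a j i * x i| + |c j| := abs_add_le _ _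
        _ ≤ (∑ i, |a j i * x i|) + |c j| := by
              gcongr; exact Finset.abs_sum_le_sum_abs _ _
        _ ≤ (∑ i, |a j i|) + |c j| := by
              refine add_le_add_left (Finset.sum_le_sum fun i _ => ?_) _
              rw [abs_mul]
              have hxi : |x i| ≤ 1 := abs_le.mpr (hx i)
              nlinarith [abs_nonneg (a j i), abs_nonneg (x i)]
        _ ≤ 1 := h j
    exact abs_le.mp hb

/-- decomposition of an affine map between pi types -/
lemma decomp_aux (m n : ℕ) (f : (Fin m → ℝ) →ᵃ[ℝ] (Fin n → ℝ)) (x : Fin m → ℝ) (j : Fin n) :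
    f x j = (∑ i, f.linear (Pi.single i 1) j * x i) + f 0 j := by
  have h0 : f x = f.linear x + f 0 := by
    have := f.map_vadd 0 x
    simpa [vadd_eq_add] using this
  have hxs : x = ∑ i, x i • (Pi.single i 1 : Fin m → ℝ) := by
    funext k
    simp [Pi.single_apply, Finset.sum_ite_eq']
  have : f.linear x j = ∑ i, f.linear (Pi.single i 1) j * x i := by
    conv_lhs => rw [hxs]
    rw [map_sum]
    simp [mul_comm]
  rw [h0]
  simp [this]

noncomputable def Lmap (m n : ℕ) (z : Fin n → Fin (m + 1) → ℝ) :
    (Fin m → ℝ) →ₗ[ℝ] (Fin n → ℝ) where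
  toFun x := fun j => ∑ i, z j i.castSucc * x i
  map_add' x y := by funext j; simp [mul_add, Finset.sum_add_distrib]
  map_smul' r x := by funext j; simp [Finset.mul_sum, mul_left_comm]

noncomputable def Smap (m n : ℕ) (z : Fin n → Fin (m + 1) → ℝ) :
    (Fin m → ℝ) →ᵃ[ℝ] (Fin n → ℝ) :=
  (Lmap m n z).toAffineMap + AffineMap.const ℝ (Fin m → ℝ) (fun j => z j (Fin.last m))

lemma Smap_apply (m n : ℕ) (z : Fin n → Fin (m + 1) → ℝ) (x : Fin m → ℝ) (j : Fin n) :
    Smap m n z x j = (∑ i, z j i.castSucc * x i) + z j (Fin.last m) := by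
  simp [Smap, Lmap]

lemma Smap_linear (m n : ℕ) (z : Fin n → Fin (m + 1) → ℝ) :
    (Smap m n z).linear = Lmap m n z := by
  simp [Smap]

lemma Smap_left_inv (m n : ℕ) (f : (Fin m → ℝ) →ᵃ[ℝ] (Fin n → ℝ)) :
    Smap m n (fun j => Fin.snoc (fun i => f.linear (Pi.single i 1) j) (f 0 j)) = f := by
  refine AffineMap.ext fun x => funext fun j => ?_
  rw [Smap_apply, decomp_aux m n f x j]
  simp

lemma Smap_right_inv (m n : ℕ) (z : Fin n → Fin (m + 1) → ℝ) :
    (fun j => Fin.snoc (fun i => (Smap m n z).linear (Pi.single i 1) j)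
      ((Smap m n z) 0 j) : Fin n → Fin (m+1) → ℝ) = z := by
  funext j i
  refine Fin.lastCases ?_ (fun i => ?_) i
  · simp [Smap_apply]
  · have : (Smap m n z).linear (Pi.single i 1) j = z j i.castSucc := by
      rw [Smap_linear]
      simp [Lmap, Pi.single_apply, Finset.sum_ite_eq']
    simp [this]

noncomputable def Phi (m n : ℕ) :
    ((Fin m → ℝ) →ᵃ[ℝ] (Fin n → ℝ)) ≃ₗ[ℝ] (Fin n → Fin (m + 1) → ℝ) where
  toFun f := fun j => Fin.snoc (fun i => f.linear (Pi.single i 1) j) (f 0 j)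
  map_add' f g := by
    funext j i
    refine Fin.lastCases ?_ (fun i => ?_) i <;> simp
  map_smul' r f := by
    funext j i
    refine Fin.lastCases ?_ (fun i => ?_) i <;> simp
  invFun z := Smap m n z
  left_inv f := Smap_left_inv m n f
  right_inv z := Smap_right_inv m n z

/-- An affine map `f : ℝ^m → ℝ^n` with coordinates `f(x)_j = ⟨a_j,x⟩ + c_j`
maps `□_m` into `□_n` iff `Σᵢ|a_j(i)| + |c_j| ≤ 1` for every `j`; consequently the linear
equivalence `f ↦ ((a_1,c_1),…,(a_n,c_n))` carries `Hom(□_m,□_n)` bijectively onto the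
`n`-fold product of the `(m+1)`-dimensional cross-polytope (the unit `ℓ¹` ball). -/
theorem hom_cube_cube
    (m n : ℕ) (hm : 1 ≤ m) (hn : 1 ≤ n) :
    (∀ (f : (Fin m → ℝ) →ᵃ[ℝ] (Fin n → ℝ)) (a : Fin n → Fin m → ℝ) (c : Fin n → ℝ),
      (∀ (x : Fin m → ℝ) (j : Fin n), f x j = (∑ i, a j i * x i) + c j) →
      ((∀ x ∈ stdCube m, f x ∈ stdCube n) ↔ ∀ j, (∑ i, |a j i|) + |c j| ≤ 1)) ∧
    (∃ Φ : ((Fin m → ℝ) →ᵃ[ℝ] (Fin n → ℝ)) ≃ₗ[ℝ] (Fin n → Fin (m + 1) → ℝ),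
      (∀ (f : (Fin m → ℝ) →ᵃ[ℝ] (Fin n → ℝ)) (j : Fin n),
        (∀ i : Fin m, Φ f j i.castSucc = f.linear (Pi.single i 1) j) ∧
        Φ f j (Fin.last m) = f 0 j) ∧
      Φ '' {f : (Fin m → ℝ) →ᵃ[ℝ] (Fin n → ℝ) | ∀ x ∈ stdCube m, f x ∈ stdCube n} =
        {z : Fin n → Fin (m + 1) → ℝ | ∀ j, (∑ i, |z j i|) ≤ 1}) := by
  refine ⟨part1_aux m n, Phi m n, fun f j => ⟨fun i => ?_, ?_⟩, ?_⟩
  · simp [Phi]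
  · simp [Phi]
  · ext z
    simp only [Set.mem_image, Set.mem_setOf_eq]
    constructor
    · rintro ⟨f, hf, rfl⟩ j
      have key := (part1_aux m n f (fun j i => f.linear (Pi.single i 1) j) (fun j => f 0 j)
        (fun x j => decomp_aux m n f x j)).mp hf j
      rw [show (Phi m n) f = fun j => Fin.snoc (fun i => f.linear (Pi.single i 1) j) (f 0 j) from rfl]
      rw [Fin.sum_univ_castSucc]
      simpa using key
    · intro hz
      refine ⟨Smap m n z, ?_, (Phi m n).right_inv z⟩
      refine (part1_aux m n (Smap m n z) (fun j i => z j i.castSucc) (fun j => z j (Fin.last m))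
        (fun x j => Smap_apply m n z x j)).mpr fun j => ?_
      have := hz j
      rw [Fin.sum_univ_castSucc] at this
      exact this
end

section
/- Let E and F be finite-dimensional real vector spaces, let P ⊆ E be a nonempty polytope whose affine span is E, let Q ⊆ F be a polytope, and let f : E → F be an affine map with f(P) ⊆ Q that is an extreme point of Hom(P,Q) = {g : E → F affine | g(P) ⊆ Q}. Then: (a) f is an extreme point of {g : E → F affine | g(P) ⊆ f(P)} (so the surjective factor of f is a vertex map); and (b) letting A ⊆ F denote the affine span of the image f(P), the inclusion affine map ι : A → F is an extreme point of {h : A → F affine | h(x) ∈ Q for every x ∈ A with x ∈ f(P)} (so the injective factor of f is a vertex map). -/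
attribute [local instance] AffineSubspace.toAddTorsor

/-- If `f` is a vertex (extreme point) of `Hom(P,Q)`, then (a) its surjective
factor is a vertex: `f` is extreme in `{g | g(P) ⊆ f(P)}`; and (b) its injective factor is a
vertex: the inclusion of `A = affineSpan(f(P))` into `F` is extreme in the set of affine maps
`A → F` sending every point of `A` lying in `f(P)` into `Q`. -/
theorem vertex_map_factors
    {E F : Type*} [AddCommGroup E] [Module ℝ E] [FiniteDimensional ℝ E]
    [AddCommGroup F] [Module ℝ F] [FiniteDimensional ℝ F]
    (P : Set E) (Q : Set F)
    (hP : ∃ SP : Finset E, P = convexHull ℝ (SP : Set E)) (hPne : P.Nonempty)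
    (hPspan : affineSpan ℝ P = ⊤)
    (hQ : ∃ SQ : Finset F, Q = convexHull ℝ (SQ : Set F))
    (f : E →ᵃ[ℝ] F) (hfPQ : ∀ x ∈ P, f x ∈ Q)
    (hf : f ∈ Set.extremePoints ℝ {g : E →ᵃ[ℝ] F | ∀ x ∈ P, g x ∈ Q})
    [Nonempty ↥(affineSpan ℝ (f '' P))] :
    (f ∈ Set.extremePoints ℝ {g : E →ᵃ[ℝ] F | ∀ x ∈ P, g x ∈ f '' P}) ∧
    ((affineSpan ℝ (f '' P)).subtype ∈
      Set.extremePoints ℝ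
        {h : ↥(affineSpan ℝ (f '' P)) →ᵃ[ℝ] F |
          ∀ x : ↥(affineSpan ℝ (f '' P)), (x : F) ∈ f '' P → h x ∈ Q}) := by
  obtain ⟨hfS, hfext⟩ := hf
  have hfP_sub : f '' P ⊆ Q := by rintro _ ⟨x, hx, rfl⟩; exact hfPQ x hx
  constructor
  · refine ⟨fun x hx => ⟨x, hx, rfl⟩, ?_⟩
    intro g₁ hg₁ g₂ hg₂ hseg
    exact hfext (fun x hx => hfP_sub (hg₁ x hx)) (fun x hx => hfP_sub (hg₂ x hx)) hseg
  · set A := affineSpan ℝ (f '' P) with hA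
    have hAeq : A = (affineSpan ℝ P).map f := by rw [hA, AffineSubspace.map_span]
    have hrange : ∀ x : E, f x ∈ A := by
      intro x
      rw [hAeq]
      exact AffineSubspace.mem_map.2 ⟨x, by simp [hPspan], rfl⟩
    have hsurj : ∀ y : F, y ∈ A → ∃ x : E, f x = y := by
      intro y hy
      rw [hAeq] at hy
      obtain ⟨x, -, hx⟩ := AffineSubspace.mem_map.1 hy
      exact ⟨x, hx⟩
    have hdir : ∀ v : E, f.linear v ∈ A.direction := by
      intro v
      have h1 : f (v + 0) -ᵥ f 0 ∈ A.direction :=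
        AffineSubspace.vsub_mem_direction (hrange _) (hrange _)
      have h2 : f.linear v = f v - f 0 := by
        have h3 := f.map_vadd 0 v
        simp only [vadd_eq_add, add_zero] at h3
        rw [h3]; abel
      rw [h2]
      simpa [vsub_eq_sub] using h1
    let f' : E →ᵃ[ℝ] A :=
      { toFun := fun x => ⟨f x, hrange x⟩
        linear := f.linear.codRestrict A.direction hdir
        map_vadd' := by
          intro p v
          ext
          exact f.map_vadd p v }
    have hf'coe : ∀ x : E, (f' x : F) = f x := fun x => rfl
    have hcomp : ∀ h : ↥A →ᵃ[ℝ] F, ∀ x : E, (h.comp f') x = h (f' x) := fun _ _ => rfl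
    refine ⟨fun x hx => hfP_sub hx, ?_⟩
    intro h₁ hh₁ h₂ hh₂ hseg
    obtain ⟨a, b, ha, hb, hab, habι⟩ := hseg
    have hg : ∀ h : ↥A →ᵃ[ℝ] F, h ∈ {h : ↥A →ᵃ[ℝ] F |
        ∀ x : ↥A, (x : F) ∈ f '' P → h x ∈ Q} → (h.comp f') ∈
        {g : E →ᵃ[ℝ] F | ∀ x ∈ P, g x ∈ Q} := by
      intro h hh x hx
      exact hh (f' x) ⟨x, hx, rfl⟩
    have hfseg : f ∈ openSegment ℝ (h₁.comp f') (h₂.comp f') := by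
      refine ⟨a, b, ha, hb, hab, ?_⟩
      ext x
      have := congrArg (fun h : ↥A →ᵃ[ℝ] F => h (f' x)) habι
      simpa [AffineSubspace.subtype_apply, hf'coe] using this
    have he₁ := hfext (hg h₁ hh₁) (hg h₂ hh₂) hfseg
    have key : ∀ h : ↥A →ᵃ[ℝ] F, h.comp f' = f → h = A.subtype := by
      intro h hcompf
      ext y
      obtain ⟨x, hx⟩ := hsurj (y : F) y.2
      have hfx : f' x = y := Subtype.ext hx
      calc h y = (h.comp f') x := by rw [hcomp, hfx]
        _ = f x := by rw [hcompf]
        _ = (A.subtype) y := by rw [hx]; rfl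
    exact key h₁ he₁
end

section
/- Let E and F be finite-dimensional real vector spaces, let P ⊆ E be a nonempty polytope whose affine span is E, let Q ⊆ F be a polytope, and let f : E → F be an affine map with f(P) ⊆ Q. Assume: (1) every extreme point of the image polytope f(P) is an extreme point of Q; (2) f is an extreme point of {g : E → F affine | g(P) ⊆ f(P)}; and (3) for every extreme point v of P, either f(v) is an extreme point of f(P) or f(v) lies in the intrinsic (relative) interior of f(P). Then f is an extreme point of Hom(P,Q) = {g : E → F affine | g(P) ⊆ Q}. -/
open Set

private lemma line_mem_nhds {F : Type*} [NormedAddCommGroup F] [NormedSpace ℝ F]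
    {R : Set F} {x : F} (hx : x ∈ intrinsicInterior ℝ R)
    {w : F} (hw : w ∈ (affineSpan ℝ R).direction) :
    {t : ℝ | x + t • w ∈ R} ∈ nhds (0 : ℝ) := by
  obtain ⟨y, hy, rfl⟩ := hx
  have hmem : ∀ t : ℝ, t • w + (y : F) ∈ affineSpan ℝ R := fun t =>
    AffineSubspace.vadd_mem_of_mem_direction (Submodule.smul_mem _ t hw) y.2
  set c : ℝ → affineSpan ℝ R := fun t => ⟨t • w + (y : F), hmem t⟩ with hc
  have hcont : Continuous c := by
    apply Continuous.subtype_mk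
    exact (continuous_id.smul continuous_const).add continuous_const
  have hc0 : c 0 = y := by
    apply Subtype.ext
    simp [hc]
  have hmem2 : c ⁻¹' (interior ((↑) ⁻¹' R : Set (affineSpan ℝ R))) ∈ nhds (0 : ℝ) :=
    (isOpen_interior.preimage hcont).mem_nhds (by rw [Set.mem_preimage, hc0]; exact hy)
  refine Filter.mem_of_superset hmem2 ?_
  intro t ht
  have h3 : c t ∈ ((↑) ⁻¹' R : Set (affineSpan ℝ R)) := interior_subset (Set.mem_preimage.1 ht)
  have : t • w + (y : F) ∈ R := h3
  rw [Set.mem_setOf_eq, add_comm]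
  exact this

private lemma affineMap_ext_of_span {E F : Type*} [NormedAddCommGroup E] [NormedSpace ℝ E]
    [NormedAddCommGroup F] [NormedSpace ℝ F]
    {s : Set E} (hs : affineSpan ℝ s = ⊤) {g f : E →ᵃ[ℝ] F}
    (h : ∀ x ∈ s, g x = f x) : g = f := by
  have hsub : s ⊆ (AffineSubspace.comap (g - f) (AffineSubspace.mk' (0 : F) ⊥) : Set E) := by
    intro x hx
    show x ∈ AffineSubspace.comap _ _
    rw [AffineSubspace.mem_comap, AffineSubspace.mem_mk']
    simp [AffineMap.coe_sub, h x hx]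
  have hle := affineSpan_le.2 hsub
  rw [hs] at hle
  ext x
  have hx : x ∈ AffineSubspace.comap (g - f) (AffineSubspace.mk' (0 : F) ⊥) :=
    hle (AffineSubspace.mem_top ℝ E x)
  rw [AffineSubspace.mem_comap, AffineSubspace.mem_mk'] at hx
  simpa [AffineMap.coe_sub, sub_eq_zero] using hx

private lemma exists_affine_functional {E : Type*} [NormedAddCommGroup E] [NormedSpace ℝ E]
    [FiniteDimensional ℝ E] {A : Set E} (hA : affineSpan ℝ A ≠ ⊤) :
    ∃ φ : E →ᵃ[ℝ] ℝ, (∀ x ∈ A, φ x = 0) ∧ ∃ z, φ z ≠ 0 := by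
  rcases A.eq_empty_or_nonempty with rfl | ⟨p, hp⟩
  · exact ⟨AffineMap.const ℝ E (1 : ℝ), by simp, ⟨0, by simp⟩⟩
  · have hpspan : p ∈ affineSpan ℝ A := subset_affineSpan ℝ A hp
    obtain ⟨q, hq⟩ : ∃ q, q ∉ affineSpan ℝ A := by
      by_contra hcon
      push_neg at hcon
      refine hA (le_antisymm le_top ?_)
      intro x _
      exact hcon x
    obtain ⟨l, u, hl, hu⟩ := geometric_hahn_banach_closed_point
      (AffineSubspace.convex _) (affineSpan ℝ A).closed_of_finiteDimensional hq
    have hconst : ∀ a ∈ affineSpan ℝ A, l a = l p := by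
      intro a ha
      by_contra hne
      set t := (u + 1 - l a) / (l a - l p) with ht
      have hmem := AffineSubspace.smul_vsub_vadd_mem _ t ha hpspan ha
      have hlt := hl _ hmem
      have hcomp : l (t • (a -ᵥ p) +ᵥ a) = t * (l a - l p) + l a := by
        simp [vsub_eq_sub, vadd_eq_add, map_add, map_smul, map_sub, smul_eq_mul]
      rw [hcomp, ht, div_mul_cancel₀ _ (sub_ne_zero.2 hne)] at hlt
      linarith
    refine ⟨(l : E →ₗ[ℝ] ℝ).toAffineMap - AffineMap.const ℝ E (l p), ?_, ⟨q, ?_⟩⟩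
    · intro x hx
      have := hconst x (subset_affineSpan ℝ A hx)
      simp [AffineMap.coe_sub, this]
    · have hlp : l p < u := hl p hpspan
      have : l q - l p ≠ 0 := sub_ne_zero.2 (by linarith)
      simpa [AffineMap.coe_sub] using this


/-- If every vertex of the image polytope `f(P)` is a vertex of `Q`, the
surjective factor of `f` is a vertex map, and every vertex of `P` maps either to a vertex of
`f(P)` or into its intrinsic interior (i.e. the surjective factor is a deflation), then `f`
is a vertex (extreme point) of `Hom(P,Q)`. -/
theorem deflation_composite_is_vertex
    {E F : Type*} [NormedAddCommGroup E] [NormedSpace ℝ E] [FiniteDimensional ℝ E]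
    [NormedAddCommGroup F] [NormedSpace ℝ F] [FiniteDimensional ℝ F]
    (P : Set E) (Q : Set F)
    (hP : ∃ SP : Finset E, P = convexHull ℝ (SP : Set E)) (hPne : P.Nonempty)
    (hPspan : affineSpan ℝ P = ⊤)
    (hQ : ∃ SQ : Finset F, Q = convexHull ℝ (SQ : Set F))
    (f : E →ᵃ[ℝ] F) (hfPQ : ∀ x ∈ P, f x ∈ Q)
    (h1 : Set.extremePoints ℝ (f '' P) ⊆ Set.extremePoints ℝ Q)
    (h2 : f ∈ Set.extremePoints ℝ {g : E →ᵃ[ℝ] F | ∀ x ∈ P, g x ∈ f '' P})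
    (h3 : ∀ v ∈ Set.extremePoints ℝ P,
      f v ∈ Set.extremePoints ℝ (f '' P) ∨ f v ∈ intrinsicInterior ℝ (f '' P)) :
    f ∈ Set.extremePoints ℝ {g : E →ᵃ[ℝ] F | ∀ x ∈ P, g x ∈ Q} := by
  classical
  obtain ⟨SP, hSP⟩ := hP
  have hPconv : Convex ℝ P := hSP ▸ convex_convexHull ℝ _
  have hRconv : Convex ℝ (f '' P) := hPconv.affine_image f
  set V : Set E := Set.extremePoints ℝ P with hV
  have hVfin : V.Finite := by
    apply SP.finite_toSet.subset
    rw [hV, hSP]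
    exact extremePoints_convexHull_subset
  have hVP : V ⊆ P := extremePoints_subset
  have hPV : P = convexHull ℝ V := by
    have hcomp : IsCompact P := hSP ▸ SP.finite_toSet.isCompact_convexHull ℝ
    have hcl := closure_convexHull_extremePoints hcomp hPconv
    rw [← hV] at hcl
    rw [← hcl, (hVfin.isClosed_convexHull ℝ).closure_eq]
  set A : Set E := {u ∈ V | f u ∈ Set.extremePoints ℝ (f '' P)} with hA
  have hAspan : affineSpan ℝ A = ⊤ := by
    by_contra hAne
    obtain ⟨φ, hφ0, z, hφz⟩ := exists_affine_functional hAne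
    obtain ⟨v, hvV, hv⟩ : ∃ v ∈ V, f v ∉ Set.extremePoints ℝ (f '' P) := by
      by_contra hcon
      push_neg at hcon
      refine hAne (top_unique ?_)
      calc (⊤ : AffineSubspace ℝ E) = affineSpan ℝ P := hPspan.symm
        _ = affineSpan ℝ V := by rw [hPV, affineSpan_convexHull]
        _ ≤ affineSpan ℝ A := affineSpan_mono ℝ (fun u hu => ⟨hu, hcon u hu⟩)
    have hvint : f v ∈ intrinsicInterior ℝ (f '' P) := (h3 v hvV).resolve_left hv
    have hDne : (affineSpan ℝ (f '' P)).direction ≠ ⊥ := by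
      intro hD
      have hfvR : f v ∈ f '' P := intrinsicInterior_subset hvint
      have hsingle : ∀ r ∈ f '' P, r = f v := by
        intro r hr
        have hmem := AffineSubspace.vsub_mem_direction
          (subset_affineSpan ℝ _ hr) (subset_affineSpan ℝ _ hfvR)
        rw [hD] at hmem
        simpa [vsub_eq_sub, sub_eq_zero] using hmem
      exact hv ⟨hfvR, fun x1 hx1 x2 hx2 _ => hsingle x1 hx1⟩
    obtain ⟨d, hdD, hd0⟩ := Submodule.exists_mem_ne_zero_of_ne_bot hDne
    set S : E → Set ℝ := fun u =>
      {t : ℝ | f u + t • (φ u • d) ∈ f '' P} ∩ {t : ℝ | f u + t • (-(φ u • d)) ∈ f '' P} with hS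
    have hSmem : ∀ u ∈ V, S u ∈ nhds (0 : ℝ) := by
      intro u huV
      by_cases huA : u ∈ A
      · have hzero : φ u = 0 := hφ0 u huA
        have hfu : f u ∈ f '' P := Set.mem_image_of_mem f (hVP huV)
        apply Filter.univ_mem'
        intro t
        exact Set.mem_inter (by simpa [hzero] using hfu) (by simpa [hzero] using hfu)
      · have hint : f u ∈ intrinsicInterior ℝ (f '' P) :=
          (h3 u huV).resolve_left (fun hc => huA ⟨huV, hc⟩)
        exact Filter.inter_mem
          (line_mem_nhds hint (Submodule.smul_mem _ (φ u) hdD))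
          (line_mem_nhds hint (Submodule.neg_mem _ (Submodule.smul_mem _ (φ u) hdD)))
    have hTmem : (⋂ u ∈ V, S u) ∈ nhds (0 : ℝ) := (Filter.biInter_mem hVfin).2 hSmem
    obtain ⟨ε, hε, hball⟩ := Metric.mem_nhds_iff.1 hTmem
    set s : ℝ := ε / 2 with hs
    have hs0 : 0 < s := by positivity
    have hsmem : ∀ u ∈ V, s ∈ S u := by
      intro u huV
      have : s ∈ Metric.ball (0 : ℝ) ε := by
        rw [Metric.mem_ball, Real.dist_eq, sub_zero, abs_of_pos hs0]
        linarith
      exact Set.mem_iInter₂.1 (hball this) u huV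
    set L : E →ᵃ[ℝ] F := s • ((LinearMap.toSpanSingleton ℝ F d).toAffineMap.comp φ) with hL
    have hLapp : ∀ x : E, L x = s • (φ x • d) := by
      intro x
      simp [hL, LinearMap.toSpanSingleton_apply]
    have himg1 : ∀ x ∈ P, (f + L) x ∈ f '' P := by
      have hVimg : ∀ u ∈ V, (f + L) u ∈ f '' P := by
        intro u huV
        have := (hsmem u huV).1
        simpa [AffineMap.coe_add, Pi.add_apply, hLapp] using this
      intro x hx
      rw [hPV] at hx
      have hxin : (f + L) x ∈ (f + L) '' convexHull ℝ V := Set.mem_image_of_mem _ hx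
      rw [AffineMap.image_convexHull] at hxin
      exact convexHull_min (by rintro y ⟨u, hu, rfl⟩; exact hVimg u hu) hRconv hxin
    have himg2 : ∀ x ∈ P, (f - L) x ∈ f '' P := by
      have hVimg : ∀ u ∈ V, (f - L) u ∈ f '' P := by
        intro u huV
        have := (hsmem u huV).2
        have h' : f u + s • (-(φ u • d)) ∈ f '' P := this
        rw [smul_neg, ← sub_eq_add_neg] at h'
        simpa [AffineMap.coe_sub, Pi.sub_apply, hLapp] using h'
      intro x hx
      rw [hPV] at hx
      have hxin : (f - L) x ∈ (f - L) '' convexHull ℝ V := Set.mem_image_of_mem _ hx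
      rw [AffineMap.image_convexHull] at hxin
      exact convexHull_min (by rintro y ⟨u, hu, rfl⟩; exact hVimg u hu) hRconv hxin
    have hseg : f ∈ openSegment ℝ (f + L) (f - L) := by
      refine ⟨1/2, 1/2, by norm_num, by norm_num, by norm_num, ?_⟩
      module
    obtain ⟨heq1, -⟩ := (mem_extremePoints.1 h2).2 (f + L) himg1 (f - L) himg2 hseg
    have hL0 : L = 0 := by
      have := heq1
      rwa [add_eq_left] at this
    have : L z = 0 := by rw [hL0]; simp
    rw [hLapp z] at this
    exact (smul_ne_zero (ne_of_gt hs0) (smul_ne_zero hφz hd0)) this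
  rw [mem_extremePoints]
  refine ⟨hfPQ, ?_⟩
  intro g hg h hh hseg
  obtain ⟨a, b, ha, hb, hab, hsum⟩ := hseg
  have heq : ∀ u ∈ A, g u = f u ∧ h u = f u := by
    rintro u ⟨huV, huE⟩
    have hfuQ := mem_extremePoints.1 (h1 huE)
    have hguQ : g u ∈ Q := hg u (hVP huV)
    have hhuQ : h u ∈ Q := hh u (hVP huV)
    have hseg' : f u ∈ openSegment ℝ (g u) (h u) := by
      refine ⟨a, b, ha, hb, hab, ?_⟩
      have := DFunLike.congr_fun hsum u
      simpa [AffineMap.coe_add, AffineMap.coe_smul, Pi.add_apply, Pi.smul_apply] using this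
    exact hfuQ.2 (g u) hguQ (h u) hhuQ hseg'
  exact ⟨affineMap_ext_of_span hAspan (fun x hx => (heq x hx).1),
    affineMap_ext_of_span hAspan (fun x hx => (heq x hx).2)⟩
end

section
/- Let E be a finite-dimensional real vector space and P ⊆ E a polytope with 0 ∈ P whose affine span is E. Let G₁,…,G_k (k ≥ 1) be closed convex subsets of P such that: (i) each Gᵢ is an extreme subset (face) of P of positive dimension (its vector span is nonzero); (ii) setting H = vectorSpan(G₁) + ⋯ + vectorSpan(G_k) and r = dim E − dim H, we have 0 ≤ r < dim E; (iii) (Gᵢ + H) ∩ P = Gᵢ for each i, where Gᵢ + H is the Minkowski sum; and (iv) the family {G₁,…,G_k} is maximal with respect to inclusion among finite families of positive-dimensional closed convex extreme subsets of P satisfying (iii) and whose vector spans sum to a subspace of codimension r in E. Let F be a finite-dimensional real vector space and f : E → F a surjective linear map with kernel H. Then f, viewed as an affine map, is an extreme point of {g : E → F affine | g(P) ⊆ f(P)}; that is, every face-collapse is a vertex map. -/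
open Pointwise

/-- Auxiliary lemma: two affine maps agreeing on a set whose vector span is everything
are equal. -/
lemma affineMap_eq_of_agree_on {E F : Type*} [AddCommGroup E] [Module ℝ E]
    [AddCommGroup F] [Module ℝ F]
    (g h : E →ᵃ[ℝ] F) {Z : Set E} (htop : vectorSpan ℝ Z = ⊤) (hne : Z.Nonempty)
    (hag : ∀ x ∈ Z, g x = h x) : g = h := by
  obtain ⟨z, hz⟩ := hne
  have hlin : g.linear = h.linear := by
    have hle : vectorSpan ℝ Z ≤ LinearMap.ker (g.linear - h.linear) := by
      rw [vectorSpan_def, Submodule.span_le]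
      rintro v ⟨p, hp, q, hq, rfl⟩
      simp only [SetLike.mem_coe, LinearMap.mem_ker, LinearMap.sub_apply]
      rw [g.linearMap_vsub, h.linearMap_vsub, hag p hp, hag q hq, sub_self]
    rw [htop, top_le_iff] at hle
    exact sub_eq_zero.1 (LinearMap.ker_eq_top.1 hle)
  ext x
  have h1 : g.linear (x - z) + g z = g x := by
    have := g.map_vadd z (x - z)
    simpa [vadd_eq_add, sub_add_cancel] using this.symm
  have h2 : h.linear (x - z) + h z = h x := by
    have := h.map_vadd z (x - z)
    simpa [vadd_eq_add, sub_add_cancel] using this.symm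
  rw [← h1, ← h2, hlin, hag z hz]

/-- Every face-collapse is a vertex map. If `G₁,…,G_k` is a family of
positive-dimensional faces of a polytope `P ∋ 0` with full affine span, satisfying
conditions (i)–(iv) of the definition of a face-collapse, and `f : E → F` is a surjective
linear map with kernel `H = vectorSpan(G₁) + ⋯ + vectorSpan(G_k)`, then `f` (as an affine
map) is an extreme point of `{g affine | g(P) ⊆ f(P)}`. -/
theorem face_collapse_is_vertex
    {E F : Type*} [NormedAddCommGroup E] [NormedSpace ℝ E] [FiniteDimensional ℝ E]
    [AddCommGroup F] [Module ℝ F] [FiniteDimensional ℝ F]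
    (P : Set E)
    (hP : ∃ SP : Finset E, P = convexHull ℝ (SP : Set E))
    (h0P : (0 : E) ∈ P)
    (hPspan : affineSpan ℝ P = ⊤)
    (k : ℕ) (hk : 1 ≤ k) (G : Fin k → Set E)
    (H : Submodule ℝ E) (hH : H = ⨆ i, vectorSpan ℝ (G i))
    (r : ℕ) (hr : r = Module.finrank ℝ E - Module.finrank ℝ ↥H)
    (hrlt : r < Module.finrank ℝ E)
    -- (i) each `Gᵢ` is a positive-dimensional face of `P`
    (hface : ∀ i, IsClosed (G i) ∧ Convex ℝ (G i) ∧ IsExtreme ℝ P (G i) ∧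
      vectorSpan ℝ (G i) ≠ ⊥)
    -- (iii) `(Gᵢ + H) ∩ P = Gᵢ`
    (hiii : ∀ i, (G i + (H : Set E)) ∩ P = G i)
    -- (iv) maximality among finite families of positive-dimensional faces satisfying (iii)
    -- whose vector spans sum to a subspace of codimension `r`
    (hiv : ∀ 𝒢 : Set (Set E), 𝒢.Finite → Set.range G ⊆ 𝒢 →
      (∀ A ∈ 𝒢, IsClosed A ∧ Convex ℝ A ∧ IsExtreme ℝ P A ∧ vectorSpan ℝ A ≠ ⊥) →
      Module.finrank ℝ E - Module.finrank ℝ ↥(⨆ A ∈ 𝒢, vectorSpan ℝ A) = r →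
      (∀ A ∈ 𝒢, (A + ((⨆ B ∈ 𝒢, vectorSpan ℝ B : Submodule ℝ E) : Set E)) ∩ P = A) →
      𝒢 = Set.range G)
    (f : E →ₗ[ℝ] F) (hfsurj : Function.Surjective f)
    (hker : LinearMap.ker f = H) :
    f.toAffineMap ∈ Set.extremePoints ℝ {g : E →ᵃ[ℝ] F | ∀ x ∈ P, g x ∈ f '' P} := by
  classical
  obtain ⟨SP, hSP⟩ := hP
  -- transport the target into a normed space via a basis of `F`
  set n := Module.finrank ℝ F with hn
  let e : F ≃ₗ[ℝ] (Fin n → ℝ) := (Module.finBasis ℝ F).equivFun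
  let f' : E →ₗ[ℝ] (Fin n → ℝ) := e.toLinearMap ∘ₗ f
  have hf'apply : ∀ x : E, f' x = e (f x) := fun x => rfl
  have hf'surj : Function.Surjective f' := e.surjective.comp hfsurj
  have hkerf' : LinearMap.ker f' = H := by
    rw [show f' = e.toLinearMap ∘ₗ f from rfl, LinearMap.ker_comp, LinearEquiv.ker,
      Submodule.comap_bot, hker]
  set Q' : Set (Fin n → ℝ) := f' '' P with hQ'
  have hQ'hull : Q' = convexHull ℝ (f' '' (SP : Set E)) := by
    rw [hQ', hSP, f'.image_convexHull]
  have hPconv : Convex ℝ P := by rw [hSP]; exact convex_convexHull ℝ _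
  have hext_sub : Q'.extremePoints ℝ ⊆ f' '' (SP : Set E) := by
    rw [hQ'hull]; exact extremePoints_convexHull_subset
  have hext_fin : (Q'.extremePoints ℝ).Finite :=
    (SP.finite_toSet.image f').subset hext_sub
  have hQ'comp : IsCompact Q' := by
    rw [hQ'hull]; exact (SP.finite_toSet.image f').isCompact_convexHull (𝕜 := ℝ)
  have hQ'conv : Convex ℝ Q' := by rw [hQ'hull]; exact convex_convexHull ℝ _
  have hKM : convexHull ℝ (Q'.extremePoints ℝ) = Q' := by
    have h1 := closure_convexHull_extremePoints hQ'comp hQ'conv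
    rwa [(hext_fin.isCompact_convexHull (𝕜 := ℝ)).isClosed.closure_eq] at h1
  have hQ'span : affineSpan ℝ Q' = ⊤ := by
    have := AffineMap.span_eq_top_of_surjective (f := f'.toAffineMap) (s := P) hf'surj hPspan
    simpa using this
  have hvsext : vectorSpan ℝ (Q'.extremePoints ℝ) = ⊤ := by
    have h1 := affineSpan_convexHull (𝕜 := ℝ) (Q'.extremePoints ℝ)
    rw [hKM, hQ'span] at h1
    rw [← direction_affineSpan, ← h1, AffineSubspace.direction_top]
  -- the set of points of `P` mapping to vertices of `Q'`
  set Z : Set E := {x ∈ P | f' x ∈ Q'.extremePoints ℝ} with hZ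
  -- each face `Gᵢ` maps to a vertex of `Q'`, hence is contained in `Z`
  have hGZ : ∀ i, G i ⊆ Z := by
    intro i x hx
    have hxP : x ∈ P := (hface i).2.2.1.1 hx
    refine ⟨hxP, ?_⟩
    rw [mem_extremePoints]
    refine ⟨⟨x, hxP, rfl⟩, ?_⟩
    rintro y₁ ⟨p₁, hp₁, rfl⟩ y₂ ⟨p₂, hp₂, rfl⟩ ⟨a, b, ha, hb, hab, hcomb⟩
    set w := a • p₁ + b • p₂ with hw
    have hwP : w ∈ P := hPconv hp₁ hp₂ ha.le hb.le hab
    have hf'w : f' w = f' x := by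
      rw [hw, map_add, map_smul, map_smul, hcomb]
    have hwG : w ∈ G i := by
      rw [← hiii i]
      refine ⟨?_, hwP⟩
      have hwx : w - x ∈ H := by
        rw [← hkerf', LinearMap.mem_ker, map_sub, hf'w, sub_self]
      have h3 : x + (w - x) ∈ G i + (H : Set E) := Set.add_mem_add hx hwx
      simpa using h3
    have hp12 : p₁ ∈ G i ∧ p₂ ∈ G i :=
      ⟨(hface i).2.2.1.2 hp₁ hp₂ hwG ⟨a, b, ha, hb, hab, rfl⟩,
        (hface i).2.2.1.2 hp₂ hp₁ hwG ⟨b, a, hb, ha, (add_comm b a).trans hab, by rw [hw, add_comm]⟩⟩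
    have hvs : vectorSpan ℝ (G i) ≤ H := hH ▸ le_iSup (fun j => vectorSpan ℝ (G j)) i
    have key : ∀ p ∈ G i, f' p = f' x := by
      intro p hp
      have h4 : p -ᵥ x ∈ vectorSpan ℝ (G i) := vsub_mem_vectorSpan ℝ hp hx
      have h5 : p - x ∈ LinearMap.ker f' := by rw [hkerf']; exact hvs h4
      have h6 : f' p - f' x = 0 := by rw [← map_sub]; exact h5
      exact sub_eq_zero.1 h6
    exact ⟨key p₁ hp12.1, key p₂ hp12.2⟩
  -- the vector span of `Z` is everything
  have hHZ : H ≤ vectorSpan ℝ Z := by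
    rw [hH]
    exact iSup_le fun i => vectorSpan_mono ℝ (hGZ i)
  have himg : f' '' Z = Q'.extremePoints ℝ := by
    apply Set.Subset.antisymm
    · rintro _ ⟨x, hx, rfl⟩; exact hx.2
    · intro q hq
      obtain ⟨x, hxP, rfl⟩ := extremePoints_subset hq
      exact ⟨x, ⟨hxP, hq⟩, rfl⟩
  have hmapZ : Submodule.map f' (vectorSpan ℝ Z) = ⊤ := by
    have h1 : Submodule.map f'.toAffineMap.linear (vectorSpan ℝ Z) =
        vectorSpan ℝ (f'.toAffineMap '' Z) := AffineMap.vectorSpan_image_eq_submodule_map _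
    simpa [himg, hvsext] using h1
  have hZtop : vectorSpan ℝ Z = ⊤ := by
    have h1 := Submodule.comap_map_eq f' (vectorSpan ℝ Z)
    rw [hmapZ, Submodule.comap_top, hkerf'] at h1
    rw [eq_top_iff, h1, sup_le_iff]
    exact ⟨le_rfl, hHZ⟩
  have hZne : Z.Nonempty := by
    have hQ'ne : Q'.Nonempty := ⟨f' 0, 0, h0P, rfl⟩
    have hextne : (Q'.extremePoints ℝ).Nonempty := by
      by_contra h
      rw [Set.not_nonempty_iff_eq_empty] at h
      rw [h, convexHull_empty] at hKM
      exact hQ'ne.ne_empty hKM.symm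
    obtain ⟨q, hq⟩ := hextne
    obtain ⟨x, hxP, rfl⟩ := extremePoints_subset hq
    exact ⟨x, hxP, hq⟩
  -- the main argument
  rw [mem_extremePoints]
  refine ⟨fun x hx => ⟨x, hx, rfl⟩, ?_⟩
  rintro g₁ hg₁ g₂ hg₂ ⟨a, b, ha, hb, hab, hcomb⟩
  have hag : ∀ x ∈ Z, g₁ x = f x ∧ g₂ x = f x := by
    rintro x ⟨hxP, hxext⟩
    obtain ⟨p₁, hp₁, he₁⟩ := hg₁ x hxP
    obtain ⟨p₂, hp₂, he₂⟩ := hg₂ x hxP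
    have hm₁ : e (g₁ x) ∈ Q' := ⟨p₁, hp₁, by rw [hf'apply, he₁]⟩
    have hm₂ : e (g₂ x) ∈ Q' := ⟨p₂, hp₂, by rw [hf'apply, he₂]⟩
    have hcx : f x = a • g₁ x + b • g₂ x := by
      have h1 := congrFun (congrArg DFunLike.coe hcomb) x
      simpa [AffineMap.coe_add, AffineMap.coe_smul] using h1.symm
    have hseg' : f' x ∈ openSegment ℝ (e (g₁ x)) (e (g₂ x)) := by
      refine ⟨a, b, ha, hb, hab, ?_⟩
      rw [hf'apply, hcx]
      simp [map_add, map_smul]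
    have h2 := (mem_extremePoints.1 hxext).2 _ hm₁ _ hm₂ hseg'
    constructor
    · have := h2.1
      rw [hf'apply] at this
      exact e.injective this
    · have := h2.2
      rw [hf'apply] at this
      exact e.injective this
  have hg₁f : g₁ = f.toAffineMap :=
    affineMap_eq_of_agree_on g₁ f.toAffineMap hZtop hZne fun x hx => (hag x hx).1
  have hg₂f : g₂ = f.toAffineMap :=
    affineMap_eq_of_agree_on g₂ f.toAffineMap hZtop hZne fun x hx => (hag x hx).2
  exact ⟨hg₁f, hg₂f⟩
end
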